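/- arXiv:1510.08781 — 7 statements merged into one kernel-verified Lean document; each statement's English description precedes it below -/
import Mathlib

section
/- The function (g,h) ↦ sqrt(ρ(g,h)) is a complete metric on the set F = {g ∈ [ω]^ω : ρ(g,ω) < ∞}. -/
open MeasureTheory Filter Set
open scoped ENNReal

noncomputable section

/-- `fEnum x` is the increasing enumeration `f_x : ω → ω` of the set `x ∈ [ω]^ω`. -/
def fEnum (x : Set ℕ) : ℕ → ℕ := Nat.nth (· ∈ x)

/-- The sequence `α^x ∈ [1/4,3/4]^ω` attached to `x ∈ [ω]^ω`:
`α^x_n = 1/4 + 1/(2·√(f_x⁻¹(n)+1))` if `n ∈ x` and `α^x_n = 1/4` otherwise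
(for `n ∈ x`, `f_x⁻¹(n)` is the number of elements of `x` below `n`). -/
noncomputable def alphaSeq (x : Set ℕ) (n : ℕ) : ℝ :=
  haveI := Classical.decPred (· ∈ x)
  if n ∈ x then 1/4 + 1/(2 * Real.sqrt ((Nat.count (· ∈ x) n : ℝ) + 1)) else 1/4

/-- `ρ(x,y) = Σ_n (α^x_n - α^y_n)² ∈ [0,∞]`. -/
noncomputable def rho (x y : Set ℕ) : ℝ≥0∞ :=
  ∑' n : ℕ, ENNReal.ofReal ((alphaSeq x n - alphaSeq y n)^2)

/-- `F = {g ∈ [ω]^ω : ρ(g,ω) < ∞}`. -/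
def Fset : Set (Set ℕ) := {g | g.Infinite ∧ rho g Set.univ < ⊤}

/-- The monoid operation `x · y = (f_y ∘ f_x)[ω]`. -/
def dotOp (x y : Set ℕ) : Set ℕ := Set.range (fEnum y ∘ fEnum x)

/-- `IsKakutaniProduct x μ` says that `μ` is the product measure
`μ^x = ∏_n (α^x_n δ_0 + (1 - α^x_n) δ_1)` on Cantor space `2^ω = ℕ → Bool`
(identifying `0` with `false` and `1` with `true`), i.e. `μ` is the Borel
probability measure giving each finite cylinder the corresponding product of
the coordinate weights.  These conditions determine `μ^x` uniquely. -/
def IsKakutaniProduct (x : Set ℕ) (μ : Measure (ℕ → Bool)) : Prop :=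
  IsProbabilityMeasure μ ∧
    ∀ (s : Finset ℕ) (f : ℕ → Bool),
      μ {g | ∀ n ∈ s, g n = f n} =
        ∏ n ∈ s, (if f n = false then ENNReal.ofReal (alphaSeq x n)
                  else ENNReal.ofReal (1 - alphaSeq x n))

/-- The subset of `ℕ` coded by a point of Cantor space. -/
def toSet (f : ℕ → Bool) : Set ℕ := {n | f n = true}

/-! ### Auxiliary lemmas -/

/-- The value `1/4 + 1/(2√(m+1))`. -/
noncomputable def kval (m : ℕ) : ℝ := 1/4 + 1/(2 * Real.sqrt ((m : ℝ) + 1))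

lemma sqrt_pos' (m : ℕ) : 0 < Real.sqrt ((m : ℝ) + 1) :=
  Real.sqrt_pos.2 (by positivity)

lemma kval_gt (m : ℕ) : 1/4 < kval m := by
  have h := sqrt_pos' m
  have : 0 < 1/(2 * Real.sqrt ((m : ℝ) + 1)) := by positivity
  unfold kval; linarith

lemma kval_strictAnti : StrictAnti kval := by
  intro a b hab
  have h1 : Real.sqrt ((a : ℝ) + 1) < Real.sqrt ((b : ℝ) + 1) :=
    Real.sqrt_lt_sqrt (by positivity) (by exact_mod_cast by omega)
  have h2 := sqrt_pos' a
  have : 1/(2 * Real.sqrt ((b : ℝ) + 1)) < 1/(2 * Real.sqrt ((a : ℝ) + 1)) := by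
    apply one_div_lt_one_div_of_lt <;> linarith
  unfold kval; linarith

lemma kval_injective : Function.Injective kval := kval_strictAnti.injective

lemma kval_tendsto : Tendsto kval atTop (nhds (1/4 : ℝ)) := by
  have hs : Tendsto Real.sqrt atTop atTop := by
    exact (tendsto_rpow_atTop (show (0:ℝ) < 1/2 by norm_num)).congr
      fun x => (Real.sqrt_eq_rpow x).symm
  have h1 : Tendsto (fun m : ℕ => 2 * Real.sqrt ((m : ℝ) + 1)) atTop atTop := by
    apply Tendsto.const_mul_atTop (by norm_num)
    exact hs.comp (tendsto_atTop_add_const_right _ 1 tendsto_natCast_atTop_atTop)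
  have h2 : Tendsto (fun m : ℕ => 1/(2 * Real.sqrt ((m : ℝ) + 1))) atTop (nhds 0) := by
    exact (tendsto_inv_atTop_zero.comp h1).congr fun m => by
      simp [Function.comp, one_div]
  have h3 := h2.const_add (1/4 : ℝ)
  simp only [add_zero] at h3
  exact h3.congr (fun m => by unfold kval; ring)

def cnt (x : Set ℕ) (n : ℕ) : ℕ :=
  haveI := Classical.decPred (· ∈ x)
  Nat.count (· ∈ x) n

lemma cnt_eq_count (x : Set ℕ) [DecidablePred (· ∈ x)] (n : ℕ) :
    cnt x n = Nat.count (· ∈ x) n := by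
  unfold cnt; congr 1

lemma cnt_congr {x y : Set ℕ} {n : ℕ} (h : ∀ j < n, (j ∈ x ↔ j ∈ y)) :
    cnt x n = cnt y n := by
  classical
  rw [cnt_eq_count, cnt_eq_count, Nat.count_eq_card_filter_range,
    Nat.count_eq_card_filter_range]
  congr 1
  apply Finset.filter_congr
  intro j hj
  simp only [Finset.mem_range] at hj
  simp [h j hj]

lemma cnt_univ (n : ℕ) : cnt Set.univ n = n := by
  classical
  rw [cnt_eq_count]
  induction n with
  | zero => rfl
  | succ n ih => rw [Nat.count_succ, ih]; simp

lemma cnt_mono (x : Set ℕ) : Monotone (cnt x) := by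
  classical
  intro a b hab
  rw [cnt_eq_count, cnt_eq_count]
  exact Nat.count_monotone _ hab

lemma cnt_lt_cnt {x : Set ℕ} {j n : ℕ} (hj : j ∈ x) (hjn : j < n) :
    cnt x j < cnt x n := by
  classical
  have h1 : cnt x (j+1) = cnt x j + 1 := by
    rw [cnt_eq_count, cnt_eq_count, Nat.count_succ, if_pos hj]
  have := cnt_mono x (show j + 1 ≤ n by omega)
  omega

lemma alphaSeq_of_mem {x : Set ℕ} {n : ℕ} (h : n ∈ x) :
    alphaSeq x n = kval (cnt x n) := by
  unfold alphaSeq kval cnt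
  rw [if_pos h]

lemma alphaSeq_of_not_mem {x : Set ℕ} {n : ℕ} (h : n ∉ x) :
    alphaSeq x n = 1/4 := by
  unfold alphaSeq; rw [if_neg h]

lemma quarter_le_alphaSeq (x : Set ℕ) (n : ℕ) : 1/4 ≤ alphaSeq x n := by
  by_cases h : n ∈ x
  · rw [alphaSeq_of_mem h]; exact (kval_gt _).le
  · rw [alphaSeq_of_not_mem h]

lemma alphaSeq_ne_iff {x : Set ℕ} {n : ℕ} : alphaSeq x n ≠ 1/4 ↔ n ∈ x := by
  by_cases h : n ∈ x
  · simp only [h, iff_true]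
    rw [alphaSeq_of_mem h]
    exact ne_of_gt (kval_gt _)
  · simp [h, alphaSeq_of_not_mem h]

lemma alphaSeq_injective : Function.Injective alphaSeq := by
  intro x y h
  ext n
  rw [← alphaSeq_ne_iff, ← alphaSeq_ne_iff (x := y), h]

/-- A convergent sequence eventually in a finite set is eventually equal to its limit. -/
lemma eventually_eq_limit {v : ℕ → ℝ} {L : ℝ} {T : Set ℝ} (hT : T.Finite)
    (hv : ∀ᶠ k in atTop, v k ∈ T) (h : Tendsto v atTop (nhds L)) :
    ∀ᶠ k in atTop, v k = L := by
  have hc : IsClosed (T \ {L}) := (hT.subset diff_subset).isClosed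
  have hm : (T \ {L})ᶜ ∈ nhds L := hc.isOpen_compl.mem_nhds (by simp)
  filter_upwards [hv, h.eventually_mem hm] with k h1 h2
  by_contra hne
  exact h2 ⟨h1, hne⟩

lemma step2 {g : ℕ → Set ℕ} {n : ℕ} {L : ℝ} (hL : L ≠ 1/4)
    (h : Tendsto (fun k => alphaSeq (g k) n) atTop (nhds L)) :
    ∃ m, L = kval m ∧ ∀ᶠ k in atTop, n ∈ g k ∧ cnt (g k) n = m := by
  have hge : 1/4 ≤ L := ge_of_tendsto' h (fun k => quarter_le_alphaSeq _ _)
  have hgt : 1/4 < L := lt_of_le_of_ne hge (Ne.symm hL)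
  set ε := L - 1/4 with hε
  obtain ⟨N, hN⟩ : ∃ N, ∀ m ≥ N, kval m < 1/4 + ε/2 :=
    eventually_atTop.1 (kval_tendsto.eventually (eventually_lt_nhds (by linarith)))
  have hev2 : ∀ᶠ k in atTop, 1/4 + ε/2 < alphaSeq (g k) n :=
    h.eventually (eventually_gt_nhds (by linarith))
  have hmem : ∀ᶠ k in atTop, n ∈ g k ∧ cnt (g k) n < N := by
    filter_upwards [hev2] with k hk
    have hng : n ∈ g k := by
      by_contra hn
      rw [alphaSeq_of_not_mem hn] at hk; linarith
    refine ⟨hng, ?_⟩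
    by_contra hc
    push_neg at hc
    rw [alphaSeq_of_mem hng] at hk
    exact absurd (hN _ hc) (by linarith)
  have hvT : ∀ᶠ k in atTop, alphaSeq (g k) n ∈ kval '' (Set.Iio N) := by
    filter_upwards [hmem] with k hk
    exact ⟨cnt (g k) n, hk.2, (alphaSeq_of_mem hk.1).symm⟩
  have heq := eventually_eq_limit ((Set.finite_Iio N).image kval) hvT h
  obtain ⟨k0, ⟨hk01, _⟩, hk03⟩ := (hmem.and heq).exists
  refine ⟨cnt (g k0) n, by rw [← hk03, alphaSeq_of_mem hk01], ?_⟩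
  filter_upwards [hmem, heq] with k hk h3
  refine ⟨hk.1, kval_injective ?_⟩
  rw [← alphaSeq_of_mem hk.1, h3, ← hk03, alphaSeq_of_mem hk01]

lemma step3 {g : ℕ → Set ℕ} {n : ℕ}
    (h : Tendsto (fun k => alphaSeq (g k) n) atTop (nhds (1/4 : ℝ))) (M : ℕ) :
    ∀ᶠ k in atTop, n ∈ g k → M < cnt (g k) n := by
  have hev : ∀ᶠ k in atTop, alphaSeq (g k) n < kval M :=
    h.eventually (eventually_lt_nhds (kval_gt M))
  filter_upwards [hev] with k hk hn
  by_contra hc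
  push_neg at hc
  have := kval_strictAnti.antitone hc
  rw [alphaSeq_of_mem hn] at hk
  linarith

lemma norm_rpow_two (r : ℝ) : ‖r‖ ^ ((2:ℝ≥0∞)).toReal = r ^ 2 := by
  rw [ENNReal.toReal_ofNat, show ((2:ℝ)) = ((2:ℕ):ℝ) by norm_num, Real.rpow_natCast]
  rw [Real.norm_eq_abs, sq_abs]

lemma summable_sq_of_rho_lt {x y : Set ℕ} (h : rho x y < ⊤) :
    Summable fun n => (alphaSeq x n - alphaSeq y n) ^ 2 := by
  have h2 := ENNReal.summable_toReal
    (f := fun n => ENNReal.ofReal ((alphaSeq x n - alphaSeq y n)^2)) h.ne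
  exact h2.congr fun n => ENNReal.toReal_ofReal (sq_nonneg _)

lemma rho_eq_ofReal {x y : Set ℕ} (h : Summable fun n => (alphaSeq x n - alphaSeq y n) ^ 2) :
    rho x y = ENNReal.ofReal (∑' n, (alphaSeq x n - alphaSeq y n) ^ 2) :=
  (ENNReal.ofReal_tsum_of_nonneg (fun n => sq_nonneg _) h).symm

lemma memℓp_two_of_summable_sq {f : ℕ → ℝ} (h : Summable fun n => f n ^ 2) :
    Memℓp f 2 := memℓp_gen (h.congr fun n => (norm_rpow_two (f n)).symm)

lemma summable_sq_of_memℓp {f : ℕ → ℝ} (h : Memℓp f 2) :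
    Summable fun n => f n ^ 2 :=
  (h.summable (by norm_num [ENNReal.toReal_ofNat])).congr fun n => norm_rpow_two (f n)

noncomputable def phiMap (g : {g : Set ℕ // g ∈ Fset}) : lp (fun _ : ℕ => ℝ) 2 :=
  ⟨fun n => alphaSeq g.1 n - alphaSeq Set.univ n,
   memℓp_two_of_summable_sq (summable_sq_of_rho_lt g.2.2)⟩

lemma phiMap_apply (g : {g : Set ℕ // g ∈ Fset}) (n : ℕ) :
    (phiMap g : ∀ _ : ℕ, ℝ) n = alphaSeq g.1 n - alphaSeq Set.univ n := rfl

lemma phiMap_injective : Function.Injective phiMap := by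
  intro g h he
  apply Subtype.ext
  apply alphaSeq_injective
  funext n
  have h2 : (phiMap g : ∀ _ : ℕ, ℝ) n = (phiMap h : ∀ _ : ℕ, ℝ) n := by rw [he]
  rw [phiMap_apply, phiMap_apply] at h2
  linarith

lemma sub_apply_phi (g h : {g : Set ℕ // g ∈ Fset}) (n : ℕ) :
    ((phiMap g - phiMap h : lp (fun _ : ℕ => ℝ) 2) : ∀ _ : ℕ, ℝ) n
      = alphaSeq g.1 n - alphaSeq h.1 n := by
  rw [lp.coeFn_sub, Pi.sub_apply, phiMap_apply, phiMap_apply]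
  ring

lemma norm_phi_sub (g h : {g : Set ℕ // g ∈ Fset}) :
    ‖phiMap g - phiMap h‖ = Real.sqrt (rho g.1 h.1).toReal := by
  have hsum : Summable fun n => (alphaSeq g.1 n - alphaSeq h.1 n) ^ 2 := by
    have h1 := summable_sq_of_memℓp (lp.memℓp (phiMap g - phiMap h))
    exact h1.congr fun n => by rw [sub_apply_phi]
  rw [rho_eq_ofReal hsum, ENNReal.toReal_ofReal (tsum_nonneg fun n => sq_nonneg _)]
  rw [lp.norm_eq_tsum_rpow (by norm_num [ENNReal.toReal_ofNat]) _, Real.sqrt_eq_rpow]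
  rw [ENNReal.toReal_ofNat]
  congr 1
  exact tsum_congr fun n => by
    rw [sub_apply_phi, ← norm_rpow_two, ENNReal.toReal_ofNat]

lemma infinite_of_summable {c : ℕ → ℝ} (hsum : Summable fun n => c n ^ 2) :
    {n | c n + alphaSeq Set.univ n ≠ 1/4}.Infinite := by
  by_contra hfin
  rw [Set.not_infinite] at hfin
  obtain ⟨B, hB⟩ : ∃ B : ℕ, ∀ n, c n + alphaSeq Set.univ n ≠ 1/4 → n < B := by
    rcases hfin.bddAbove with ⟨b, hb⟩
    exact ⟨b + 1, fun n hn => Nat.lt_succ_of_le (hb hn)⟩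
  have hc : ∀ n : ℕ, B ≤ n → c n ^ 2 = 1/((4:ℝ)*((n:ℝ)+1)) := by
    intro n hn
    have h1 : c n + alphaSeq Set.univ n = 1/4 := by
      by_contra h
      exact absurd (hB n h) (by omega)
    have h2 : alphaSeq Set.univ n = kval n := by
      rw [alphaSeq_of_mem (Set.mem_univ n), cnt_univ]
    rw [h2] at h1
    unfold kval at h1
    have h3 : c n = -(1/(2*Real.sqrt ((n:ℝ)+1))) := by linarith
    have h4 : Real.sqrt ((n:ℝ)+1) ^ 2 = (n:ℝ)+1 := Real.sq_sqrt (by positivity)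
    have h5 := sqrt_pos' n
    rw [h3]
    field_simp
    nlinarith
  have h5 : Summable (fun j : ℕ => c (j + B) ^ 2) := (summable_nat_add_iff B).2 hsum
  have h6 : Summable (fun j : ℕ => 1/((4:ℝ)*((j:ℝ)+(B:ℝ)+1))) := by
    refine h5.congr fun j => ?_
    rw [hc (j + B) (by omega)]
    push_cast
    ring_nf
  have h7 : Summable (fun j : ℕ => 1/(((j:ℝ)+((B:ℝ)+1)))) := by
    have h8 := h6.mul_left 4
    refine h8.congr fun j => ?_
    have : (j:ℝ) + (B:ℝ) + 1 > 0 := by positivity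
    field_simp
    ring
  have h9 : Summable (fun j : ℕ => 1/((j:ℝ))) := by
    rw [← summable_nat_add_iff (B + 1)]
    refine h7.congr fun j => ?_
    push_cast
    ring_nf
  exact Real.not_summable_one_div_natCast h9

set_option synthInstance.maxHeartbeats 1000000 in
lemma isClosed_range_phiMap : IsClosed (Set.range phiMap) := by
  apply IsSeqClosed.isClosed
  intro u c hu hc
  choose g hg using hu
  have hpt : ∀ n, Tendsto (fun k => alphaSeq (g k).1 n) atTop
      (nhds (c n + alphaSeq Set.univ n)) := by
    intro n
    have h0 : Tendsto (fun k => ‖u k - c‖) atTop (nhds 0) :=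
      tendsto_iff_norm_sub_tendsto_zero.1 hc
    have h1 : Tendsto (fun k => (u k : ∀ _ : ℕ, ℝ) n) atTop (nhds ((c : ∀ _ : ℕ, ℝ) n)) := by
      rw [tendsto_iff_norm_sub_tendsto_zero]
      refine squeeze_zero_norm (fun k => ?_) h0
      have he : (u k : ∀ _ : ℕ, ℝ) n - (c : ∀ _ : ℕ, ℝ) n
          = ((u k - c : lp (fun _ : ℕ => ℝ) 2) : ∀ _ : ℕ, ℝ) n := by
        rw [lp.coeFn_sub, Pi.sub_apply]
      rw [norm_norm, he]
      exact lp.norm_apply_le_norm two_ne_zero _ n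
    have h3 := h1.add_const (alphaSeq Set.univ n)
    refine h3.congr fun k => ?_
    rw [← hg k, phiMap_apply]
    ring
  set A : ℕ → ℝ := fun n => (c : ∀ _ : ℕ, ℝ) n + alphaSeq Set.univ n with hA
  have hstep2 : ∀ n, A n ≠ 1/4 →
      ∃ m, A n = kval m ∧ ∀ᶠ k in atTop, n ∈ (g k).1 ∧ cnt (g k).1 n = m :=
    fun n hn => step2 hn (hpt n)
  choose! m hm1 hm2 using hstep2
  set gs : Set ℕ := {n | A n ≠ 1/4} with hgs
  have key : ∀ n, A n ≠ 1/4 → m n = cnt gs n := by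
    intro n hn
    have hP : ∀ j, ∀ᶠ k in atTop,
        ((A j ≠ 1/4 → j ∈ (g k).1 ∧ cnt (g k).1 j = m j) ∧
         (A j = 1/4 → j ∈ (g k).1 → m n < cnt (g k).1 j)) := by
      intro j
      by_cases hj : A j = 1/4
      · have h3 := step3 (g := fun k => (g k).1) (n := j) (by rw [← hj]; exact hpt j) (m n)
        filter_upwards [h3] with k hk
        exact ⟨fun hne => absurd hj hne, fun _ => hk⟩
      · filter_upwards [hm2 j hj] with k hk
        exact ⟨fun _ => hk, fun he => absurd he hj⟩
    have hall : ∀ᶠ k in atTop, ∀ j ∈ Finset.range n,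
        ((A j ≠ 1/4 → j ∈ (g k).1 ∧ cnt (g k).1 j = m j) ∧
         (A j = 1/4 → j ∈ (g k).1 → m n < cnt (g k).1 j)) :=
      (eventually_all_finset _).2 fun j _ => hP j
    obtain ⟨K, hK1, hK2⟩ := ((hm2 n hn).and hall).exists
    have hKn := hK1.2
    have hiff : ∀ j < n, (j ∈ (g K).1 ↔ j ∈ gs) := by
      intro j hj
      have hPj := hK2 j (Finset.mem_range.2 hj)
      by_cases hq : A j = 1/4
      · simp only [hgs, Set.mem_setOf_eq]
        constructor
        · intro hjg
          exfalso
          have h1 := hPj.2 hq hjg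
          have h2 : cnt (g K).1 j < cnt (g K).1 n := cnt_lt_cnt hjg hj
          omega
        · intro hjs
          exact absurd hq hjs
      · simp only [hgs, Set.mem_setOf_eq]
        exact ⟨fun _ => hq, fun _ => (hPj.1 hq).1⟩
    rw [← hKn, cnt_congr hiff]
  have hAeq : ∀ n, A n = alphaSeq gs n := by
    intro n
    by_cases hn : A n = 1/4
    · have hns : n ∉ gs := by simp [hgs, hn]
      rw [hn, alphaSeq_of_not_mem hns]
    · have hng : n ∈ gs := hn
      rw [hm1 n hn, key n hn, ← alphaSeq_of_mem hng]
  have hsumc : Summable fun n => (c : ∀ _ : ℕ, ℝ) n ^ 2 := summable_sq_of_memℓp (lp.memℓp c)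
  have hinf : gs.Infinite := by
    have h1 := infinite_of_summable hsumc
    exact h1
  have hsumgs : Summable fun n => (alphaSeq gs n - alphaSeq Set.univ n) ^ 2 := by
    refine hsumc.congr fun n => ?_
    rw [← hAeq n]
    simp [hA]
  have hrho : rho gs Set.univ < ⊤ := by
    rw [rho_eq_ofReal hsumgs]
    exact ENNReal.ofReal_lt_top
  refine ⟨⟨gs, hinf, hrho⟩, ?_⟩
  apply Subtype.ext
  funext n
  show alphaSeq gs n - alphaSeq Set.univ n = (c : ∀ _ : ℕ, ℝ) n
  rw [← hAeq n]
  simp [hA]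

/-- `(g,h) ↦ √(ρ(g,h))` is a complete metric on `F`. -/
theorem exists_complete_metric_sqrt_rho :
    ∃ m : MetricSpace {g : Set ℕ // g ∈ Fset},
      (∀ g h : {g : Set ℕ // g ∈ Fset},
        m.dist g h = Real.sqrt (rho g.1 h.1).toReal) ∧
      @CompleteSpace _ m.toUniformSpace := by
  letI m : MetricSpace {g : Set ℕ // g ∈ Fset} :=
    MetricSpace.induced phiMap phiMap_injective inferInstance
  refine ⟨m, fun g h => ?_, ?_⟩
  · show dist (phiMap g) (phiMap h) = _
    rw [dist_eq_norm, norm_phi_sub]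
  · have hiso : Isometry phiMap := Isometry.of_dist_eq fun a b => rfl
    rw [completeSpace_iff_isComplete_range hiso.isUniformInducing]
    exact isClosed_range_phiMap.isComplete

end
end

section
/- For every g ∈ F and every x ∈ [ω]^ω, ρ(g·x, x) = ρ(g, ω). Consequently F is closed under the operation ·, and so (F, ·, ω) is a submonoid of ([ω]^ω, ·, ω). -/
open MeasureTheory Filter Set
open scoped ENNReal

noncomputable section

/-- `Nat.nth` of the range of a strictly monotone function is that function. -/
lemma nth_range_strictMono {f : ℕ → ℕ} (hf : StrictMono f) (n : ℕ) :
    Nat.nth (· ∈ Set.range f) n = f n := by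
  induction n using Nat.strong_induction_on with
  | _ n ih =>
    have hinf : {k | k ∈ Set.range f}.Infinite := Set.infinite_range_of_injective hf.injective
    have hL := Nat.isLeast_nth_of_infinite (p := (· ∈ Set.range f)) hinf n
    refine le_antisymm ?_ ?_
    · exact hL.2 ⟨⟨n, rfl⟩, fun k hk => by rw [ih k hk]; exact hf hk⟩
    · obtain ⟨m, hm⟩ := hL.1.1
      rw [← hm]
      refine hf.monotone ?_
      by_contra h
      push_neg at h
      have h1 := ih m h
      have h2 := (Nat.nth_lt_nth (p := (· ∈ Set.range f)) hinf).mpr h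
      rw [h1, hm] at h2
      exact lt_irrefl _ h2

lemma count_univ (m : ℕ) :
    @Nat.count (· ∈ (Set.univ : Set ℕ)) (Classical.decPred _) m = m := by
  simp [Nat.count_eq_card_filter_range]

lemma alphaSeq_univ (m : ℕ) :
    alphaSeq Set.univ m = 1/4 + 1/(2 * Real.sqrt ((m : ℝ) + 1)) := by
  simp [alphaSeq, count_univ]

lemma alphaSeq_nth {x : Set ℕ} (hx : x.Infinite) (m : ℕ) :
    alphaSeq x (fEnum x m) = 1/4 + 1/(2 * Real.sqrt ((m : ℝ) + 1)) := by
  have h1 : Nat.nth (· ∈ x) m ∈ x := Nat.nth_mem_of_infinite hx m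
  have h2 : @Nat.count (· ∈ x) (Classical.decPred _) (Nat.nth (· ∈ x) m) = m :=
    @Nat.count_nth_of_infinite (· ∈ x) (Classical.decPred _) hx m
  simp only [alphaSeq, fEnum, if_pos h1, h2]
  exact if_pos h1

lemma rho_dotOp_eq {g : Set ℕ} (hg : g.Infinite) {x : Set ℕ} (hx : x.Infinite) :
    rho (dotOp g x) x = rho g Set.univ := by
  set F : ℕ → ℕ := fEnum x ∘ fEnum g with hF
  have hFmono : StrictMono F := (Nat.nth_strictMono hx).comp (Nat.nth_strictMono hg)
  have hd : dotOp g x = Set.range F := rfl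
  have hdinf : (dotOp g x).Infinite := by
    rw [hd]; exact Set.infinite_range_of_injective hFmono.injective
  have hnth : ∀ k, fEnum (dotOp g x) k = F k := by
    intro k
    rw [hd]
    exact nth_range_strictMono hFmono k
  -- key pointwise identities
  have key1 : ∀ m, alphaSeq (dotOp g x) (fEnum x m) = alphaSeq g m := by
    intro m
    by_cases hm : m ∈ g
    · set k := @Nat.count (· ∈ g) (Classical.decPred _) m with hk
      have hmk : fEnum g k = m := @Nat.nth_count (· ∈ g) (Classical.decPred _) m hm
      have hmem : fEnum x m ∈ dotOp g x := by
        rw [hd]; exact ⟨k, by simp [hF, hmk]⟩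
      have hcnt : @Nat.count (· ∈ dotOp g x) (Classical.decPred _) (fEnum x m) = k := by
        have he : fEnum x m = fEnum (dotOp g x) k := by
          rw [hnth k]; simp [hF, hmk]
        rw [he]
        exact @Nat.count_nth_of_infinite (· ∈ dotOp g x) (Classical.decPred _) hdinf k
      simp [alphaSeq, hmem, hm, hcnt, ← hk]
    · have hmem : fEnum x m ∉ dotOp g x := by
        rw [hd]
        rintro ⟨k, hkm⟩
        have : fEnum g k = m := Nat.nth_injective hx hkm
        exact hm (this ▸ Nat.nth_mem_of_infinite hg k)
      simp [alphaSeq, hmem, hm]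
  have key2 : ∀ m, alphaSeq x (fEnum x m) = alphaSeq Set.univ m := by
    intro m
    rw [alphaSeq_nth hx m, alphaSeq_univ m]
  -- the summand vanishes outside the range of `fEnum x`
  have hsupp : Function.support
      (fun n => ENNReal.ofReal ((alphaSeq (dotOp g x) n - alphaSeq x n)^2)) ⊆
      Set.range (fEnum x) := by
    intro n hn
    by_contra hnx
    have hnx' : n ∉ x := fun h => hnx (Nat.subset_range_nth h)
    have hnd : n ∉ dotOp g x := by
      rw [hd]
      rintro ⟨k, hk⟩
      exact hnx ⟨fEnum g k, hk⟩
    apply hn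
    simp [alphaSeq, hnx', hnd]
  calc rho (dotOp g x) x
      = ∑' m : ℕ, ENNReal.ofReal
          ((alphaSeq (dotOp g x) (fEnum x m) - alphaSeq x (fEnum x m))^2) :=
        ((Nat.nth_injective hx).tsum_eq hsupp).symm
    _ = rho g Set.univ := by
        unfold rho
        congr 1
        funext m
        rw [key1 m, key2 m]

lemma rho_self (x : Set ℕ) : rho x x = 0 := by
  simp [rho, sub_self]

lemma rho_triangle_bound (a b c : Set ℕ) :
    rho a c ≤ 2 * rho a b + 2 * rho b c := by
  unfold rho
  rw [← ENNReal.tsum_mul_left, ← ENNReal.tsum_mul_left, ← ENNReal.tsum_add]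
  refine ENNReal.tsum_le_tsum fun n => ?_
  set u := alphaSeq a n
  set v := alphaSeq b n
  set w := alphaSeq c n
  have h1 : (u - w)^2 ≤ 2 * (u - v)^2 + 2 * (v - w)^2 := by nlinarith [sq_nonneg (u - 2*v + w)]
  calc ENNReal.ofReal ((u - w)^2)
      ≤ ENNReal.ofReal (2 * (u - v)^2 + 2 * (v - w)^2) := ENNReal.ofReal_le_ofReal h1
    _ = ENNReal.ofReal (2 * (u - v)^2) + ENNReal.ofReal (2 * (v - w)^2) :=
        ENNReal.ofReal_add (by positivity) (by positivity)
    _ = 2 * ENNReal.ofReal ((u - v)^2) + 2 * ENNReal.ofReal ((v - w)^2) := by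
        rw [ENNReal.ofReal_mul two_pos.le, ENNReal.ofReal_mul two_pos.le,
          ENNReal.ofReal_ofNat]

/-- For every `g ∈ F` and `x ∈ [ω]^ω`, `ρ(g·x, x) = ρ(g, ω)`; consequently `F`
is closed under `·` and (since `ω ∈ F`) is a submonoid of `([ω]^ω, ·, ω)`. -/
theorem rho_dotOp_eq_and_Fset_closed :
    (∀ g ∈ Fset, ∀ x : Set ℕ, x.Infinite → rho (dotOp g x) x = rho g Set.univ) ∧
    (∀ g ∈ Fset, ∀ h ∈ Fset, dotOp g h ∈ Fset) ∧
    Set.univ ∈ Fset := by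
  refine ⟨fun g hg x hx => rho_dotOp_eq hg.1 hx, fun g hg h hh => ?_, ?_⟩
  · have hinf : (dotOp g h).Infinite :=
      Set.infinite_range_of_injective
        ((Nat.nth_strictMono hh.1).comp (Nat.nth_strictMono hg.1)).injective
    refine ⟨hinf, lt_of_le_of_lt (rho_triangle_bound (dotOp g h) h Set.univ) ?_⟩
    rw [rho_dotOp_eq hg.1 hh.1]
    exact ENNReal.add_lt_top.mpr
      ⟨ENNReal.mul_lt_top ENNReal.ofNat_lt_top hg.2, ENNReal.mul_lt_top ENNReal.ofNat_lt_top hh.2⟩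
  · exact ⟨Set.infinite_univ, by rw [rho_self]; exact ENNReal.zero_lt_top⟩

end
end

section
/- If z ⊆ y ⊆ x are infinite sets of natural numbers, then ρ(y,x) ≤ ρ(z,x). -/
open MeasureTheory Filter Set
open scoped ENNReal

noncomputable section

private lemma count_mono_pred {p q : ℕ → Prop} [DecidablePred p] [DecidablePred q]
    (h : ∀ k, p k → q k) (n : ℕ) : Nat.count p n ≤ Nat.count q n := by
  simp only [Nat.count_eq_card_filter_range]
  exact Finset.card_le_card (Finset.monotone_filter_right _ (fun k _ => h k))

private lemma inv_sqrt_antitone {m n : ℕ} (hmn : m ≤ n) :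
    1/(2*Real.sqrt ((n:ℝ)+1)) ≤ 1/(2*Real.sqrt ((m:ℝ)+1)) := by
  have h1 : (0:ℝ) < Real.sqrt ((m:ℝ)+1) := Real.sqrt_pos.2 (by positivity)
  have h2 : Real.sqrt ((m:ℝ)+1) ≤ Real.sqrt ((n:ℝ)+1) := by
    apply Real.sqrt_le_sqrt
    have : (m:ℝ) ≤ n := by exact_mod_cast hmn
    linarith
  gcongr

private lemma sq_diff_mono {i k l : ℕ} (hik : i ≤ k) (hkl : k ≤ l) :
    (1/(2*Real.sqrt ((i:ℝ)+1)) - 1/(2*Real.sqrt ((k:ℝ)+1)))^2 ≤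
    (1/(2*Real.sqrt ((i:ℝ)+1)) - 1/(2*Real.sqrt ((l:ℝ)+1)))^2 := by
  have h1 := inv_sqrt_antitone hik
  have h2 := inv_sqrt_antitone hkl
  have h0 : (0:ℝ) ≤ 1/(2*Real.sqrt ((i:ℝ)+1)) - 1/(2*Real.sqrt ((k:ℝ)+1)) := by linarith
  apply pow_le_pow_left₀ h0
  linarith

/-- If z ⊆ y ⊆ x are infinite sets of naturals then ρ(y,x) ≤ ρ(z,x). -/
theorem rho_antitone (x y z : Set ℕ)
    (hx : x.Infinite) (hy : y.Infinite) (hz : z.Infinite)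
    (hzy : z ⊆ y) (hyx : y ⊆ x) :
    rho y x ≤ rho z x := by
  classical
  have hzx : z ⊆ x := hzy.trans hyx
  have hinfz : (setOf (· ∈ z)).Infinite := hz
  have hinfy : (setOf (· ∈ y)).Infinite := hy
  set j : ℕ → ℕ := fun n => if n ∈ y then Nat.nth (· ∈ z) (Nat.count (· ∈ y) n) else n
    with hjdef
  have hj_mem : ∀ n ∈ y, j n = Nat.nth (· ∈ z) (Nat.count (· ∈ y) n) := by
    intro n hn; simp [hjdef, hn]
  have hj_not : ∀ n, n ∉ y → j n = n := by
    intro n hn; simp [hjdef, hn]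
  have hj_inj : Function.Injective j := by
    intro n m hnm
    by_cases hn : n ∈ y <;> by_cases hm : m ∈ y
    · rw [hj_mem n hn, hj_mem m hm] at hnm
      have hcount : Nat.count (· ∈ y) n = Nat.count (· ∈ y) m :=
        Nat.nth_injective hinfz hnm
      calc n = Nat.nth (· ∈ y) (Nat.count (· ∈ y) n) := (Nat.nth_count hn).symm
        _ = Nat.nth (· ∈ y) (Nat.count (· ∈ y) m) := by rw [hcount]
        _ = m := Nat.nth_count hm
    · exfalso
      rw [hj_mem n hn, hj_not m hm] at hnm
      exact hm (hnm ▸ hzy (Nat.nth_mem_of_infinite hinfz _))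
    · exfalso
      rw [hj_not n hn, hj_mem m hm] at hnm
      exact hn (hnm ▸ hzy (Nat.nth_mem_of_infinite hinfz _))
    · rw [hj_not n hn, hj_not m hm] at hnm; exact hnm
  have key : ∀ n, ENNReal.ofReal ((alphaSeq y n - alphaSeq x n)^2) ≤
      ENNReal.ofReal ((alphaSeq z (j n) - alphaSeq x (j n))^2) := by
    intro n
    by_cases hn : n ∈ y
    · rw [hj_mem n hn]
      set i := Nat.count (· ∈ y) n with hi
      set m := Nat.nth (· ∈ z) i with hm
      have hmz : m ∈ z := Nat.nth_mem_of_infinite hinfz i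
      have hmx : m ∈ x := hzx hmz
      have hnx : n ∈ x := hyx hn
      have hczm : Nat.count (· ∈ z) m = i := Nat.count_nth_of_infinite hinfz i
      have hnm : n ≤ m := by
        have hmy : m ∈ y := hzy hmz
        have h1 : n = Nat.nth (· ∈ y) i := (Nat.nth_count hn).symm
        have h2 : Nat.nth (· ∈ y) (Nat.count (· ∈ y) m) = m := Nat.nth_count hmy
        have h3 : i ≤ Nat.count (· ∈ y) m := by
          calc i = Nat.count (· ∈ z) m := hczm.symm
            _ ≤ Nat.count (· ∈ y) m := count_mono_pred (fun k hk => hzy hk) m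
        calc n = Nat.nth (· ∈ y) i := h1
          _ ≤ Nat.nth (· ∈ y) (Nat.count (· ∈ y) m) :=
            (Nat.nth_strictMono hinfy).monotone h3
          _ = m := h2
      have hik : i ≤ Nat.count (· ∈ x) n := by
        calc i = Nat.count (· ∈ y) n := hi
          _ ≤ Nat.count (· ∈ x) n := count_mono_pred (fun k hk => hyx hk) n
      have hkl : Nat.count (· ∈ x) n ≤ Nat.count (· ∈ x) m := Nat.count_monotone _ hnm
      have e1 : alphaSeq y n = 1/4 + 1/(2 * Real.sqrt ((i:ℝ)+1)) := by
        simp only [alphaSeq, if_pos hn]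
        rfl
      have e2 : alphaSeq x n = 1/4 + 1/(2 * Real.sqrt ((Nat.count (· ∈ x) n : ℝ)+1)) := by
        simp only [alphaSeq, if_pos hnx]
      have e3 : alphaSeq z m = 1/4 + 1/(2 * Real.sqrt ((i:ℝ)+1)) := by
        simp only [alphaSeq, if_pos hmz, hczm]
      have e4 : alphaSeq x m = 1/4 + 1/(2 * Real.sqrt ((Nat.count (· ∈ x) m : ℝ)+1)) := by
        simp only [alphaSeq, if_pos hmx]
      apply ENNReal.ofReal_le_ofReal
      rw [e1, e2, e3, e4]
      have := sq_diff_mono hik hkl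
      calc (1/4 + 1/(2 * Real.sqrt ((i:ℝ)+1)) -
              (1/4 + 1/(2 * Real.sqrt ((Nat.count (· ∈ x) n : ℝ)+1))))^2
          = (1/(2*Real.sqrt ((i:ℝ)+1)) - 1/(2*Real.sqrt ((Nat.count (· ∈ x) n : ℝ)+1)))^2 := by
            ring
        _ ≤ (1/(2*Real.sqrt ((i:ℝ)+1)) - 1/(2*Real.sqrt ((Nat.count (· ∈ x) m : ℝ)+1)))^2 :=
            sq_diff_mono hik hkl
        _ = (1/4 + 1/(2 * Real.sqrt ((i:ℝ)+1)) -
              (1/4 + 1/(2 * Real.sqrt ((Nat.count (· ∈ x) m : ℝ)+1))))^2 := by ring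
    · rw [hj_not n hn]
      have hnz : n ∉ z := fun h => hn (hzy h)
      have e1 : alphaSeq y n = 1/4 := by simp only [alphaSeq, if_neg hn]
      have e2 : alphaSeq z n = 1/4 := by simp only [alphaSeq, if_neg hnz]
      rw [e1, e2]
  calc rho y x = ∑' n, ENNReal.ofReal ((alphaSeq y n - alphaSeq x n)^2) := rfl
    _ ≤ ∑' n, ENNReal.ofReal ((alphaSeq z (j n) - alphaSeq x (j n))^2) :=
        ENNReal.tsum_le_tsum key
    _ ≤ rho z x := ENNReal.tsum_comp_le_tsum_of_injective hj_inj _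


end
end

section
/- For every natural number k, the set ω∖k = {n ∈ ω : n ≥ k} belongs to F, i.e., Σ_{n≥k} (1/√(n+1) − 1/√(n+1−k))² < ∞ and hence ρ(ω∖k, ω) < ∞. -/
open MeasureTheory Filter Set
open scoped ENNReal

noncomputable section

/-- Reindexing equivalence `ℕ ≃ {n : ℕ // k ≤ n}`. -/
def eAdd (k : ℕ) : ℕ ≃ {n : ℕ // k ≤ n} where
  toFun m := ⟨m + k, Nat.le_add_left _ _⟩
  invFun n := n.1 - k
  left_inv m := by simp
  right_inv n := by ext; simp [Nat.sub_add_cancel n.2]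

lemma summable_G (k : ℕ) :
    Summable (fun m : ℕ =>
      (1 / Real.sqrt ((m : ℝ) + 1) - 1 / Real.sqrt ((m : ℝ) + (k : ℝ) + 1)) ^ 2) := by
  have hbase : Summable (fun m : ℕ => (k : ℝ) * (1 / ((m : ℝ) + 1) ^ 2)) := by
    apply Summable.mul_left
    have h := (summable_nat_add_iff (f := fun n : ℕ => 1 / (n : ℝ) ^ 2) 1).mpr
      (Real.summable_one_div_nat_pow.mpr one_lt_two)
    refine h.congr fun m => ?_
    push_cast
    ring
  refine Summable.of_nonneg_of_le (fun m => sq_nonneg _) (fun m => ?_) hbase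
  set x : ℝ := (m : ℝ) + 1 with hxdef
  have hx0 : (0 : ℝ) < x := by positivity
  have hy0 : (0 : ℝ) < x + k := by positivity
  have hsx : (0 : ℝ) < Real.sqrt x := Real.sqrt_pos.mpr hx0
  have hsy : (0 : ℝ) < Real.sqrt (x + k) := Real.sqrt_pos.mpr hy0
  have hxy : Real.sqrt x ≤ Real.sqrt (x + k) := Real.sqrt_le_sqrt (by linarith)
  have hab : 1 / Real.sqrt (x + k) ≤ 1 / Real.sqrt x :=
    one_div_le_one_div_of_le hsx hxy
  have hb0 : (0 : ℝ) < 1 / Real.sqrt (x + k) := by positivity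
  have harg : (m : ℝ) + (k : ℝ) + 1 = x + k := by rw [hxdef]; ring
  rw [harg]
  have step1 : (1 / Real.sqrt x - 1 / Real.sqrt (x + k)) ^ 2
      ≤ (1 / Real.sqrt x) ^ 2 - (1 / Real.sqrt (x + k)) ^ 2 := by nlinarith
  have ha2 : (1 / Real.sqrt x) ^ 2 = 1 / x := by
    rw [div_pow, one_pow, Real.sq_sqrt hx0.le]
  have hb2 : (1 / Real.sqrt (x + k)) ^ 2 = 1 / (x + k) := by
    rw [div_pow, one_pow, Real.sq_sqrt hy0.le]
  have step2 : 1 / x - 1 / (x + k) = (k : ℝ) / (x * (x + k)) := by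
    field_simp
    ring
  have step3 : (k : ℝ) / (x * (x + k)) ≤ (k : ℝ) * (1 / x ^ 2) := by
    rw [mul_one_div]
    gcongr
    nlinarith
  calc (1 / Real.sqrt x - 1 / Real.sqrt (x + k)) ^ 2
      ≤ (1 / Real.sqrt x) ^ 2 - (1 / Real.sqrt (x + k)) ^ 2 := step1
    _ = (k : ℝ) / (x * (x + k)) := by rw [ha2, hb2, step2]
    _ ≤ (k : ℝ) * (1 / x ^ 2) := step3

lemma count_le_pred (k : ℕ) (inst : DecidablePred (· ∈ {m : ℕ | k ≤ m})) (n : ℕ) :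
    @Nat.count (· ∈ {m : ℕ | k ≤ m}) inst n = n - k := by
  induction n with
  | zero => simp
  | succ n ih =>
    rw [Nat.count_succ, ih]
    by_cases h : k ≤ n
    · simp only [Set.mem_setOf_eq, if_pos h]; omega
    · simp only [Set.mem_setOf_eq, if_neg h]; omega

lemma count_univ_pred (inst : DecidablePred (· ∈ (Set.univ : Set ℕ))) (n : ℕ) :
    @Nat.count (· ∈ (Set.univ : Set ℕ)) inst n = n := by
  induction n with
  | zero => simp
  | succ n ih => rw [Nat.count_succ, ih]; simp

/-- For every `k`, the tail `ω∖k = {n : k ≤ n}` belongs to `F`: the series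
`Σ_{n ≥ k} (1/√(n+1) − 1/√(n+1−k))²` converges, and hence `ρ(ω∖k, ω) < ∞`. -/
theorem tail_mem_Fset (k : ℕ) :
    (∑' n : {n : ℕ // k ≤ n},
        ENNReal.ofReal
          ((1 / Real.sqrt (((n : ℕ) : ℝ) + 1)
            - 1 / Real.sqrt (((n : ℕ) : ℝ) + 1 - (k : ℝ)))^2)) < ⊤ ∧
    {n : ℕ | k ≤ n} ∈ Fset := by
  classical
  have hG := summable_G k
  constructor
  · rw [← Equiv.tsum_eq (eAdd k)]
    have heq : ∀ m : ℕ,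
        ENNReal.ofReal
          ((1 / Real.sqrt ((((eAdd k m : {n : ℕ // k ≤ n}) : ℕ) : ℝ) + 1)
            - 1 / Real.sqrt ((((eAdd k m : {n : ℕ // k ≤ n}) : ℕ) : ℝ) + 1 - (k : ℝ))) ^ 2)
        = ENNReal.ofReal
          ((1 / Real.sqrt ((m : ℝ) + 1) - 1 / Real.sqrt ((m : ℝ) + (k : ℝ) + 1)) ^ 2) := by
      intro m
      have h1 : (((eAdd k m : {n : ℕ // k ≤ n}) : ℕ) : ℝ) = (m : ℝ) + (k : ℝ) := by
        simp [eAdd]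
      rw [h1]
      have h2 : (m : ℝ) + (k : ℝ) + 1 - (k : ℝ) = (m : ℝ) + 1 := by ring
      rw [h2]
      congr 1
      ring
    rw [tsum_congr heq,
      ← ENNReal.ofReal_tsum_of_nonneg (fun m => sq_nonneg _) hG]
    exact ENNReal.ofReal_lt_top
  · refine ⟨Set.Ici_infinite k, ?_⟩
    have halpha : ∀ n : ℕ,
        (alphaSeq {m : ℕ | k ≤ m} (n + k) - alphaSeq Set.univ (n + k)) ^ 2
          = (1 / 4) * (1 / Real.sqrt ((n : ℝ) + 1)
              - 1 / Real.sqrt ((n : ℝ) + (k : ℝ) + 1)) ^ 2 := by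
      intro n
      have hmem : (n + k) ∈ {m : ℕ | k ≤ m} := Nat.le_add_left _ _
      rw [alphaSeq, alphaSeq, if_pos hmem, if_pos (Set.mem_univ _),
        count_le_pred, count_univ_pred]
      have h1 : ((n + k - k : ℕ) : ℝ) = (n : ℝ) := by
        rw [Nat.add_sub_cancel]
      have h2 : ((n + k : ℕ) : ℝ) + 1 = (n : ℝ) + (k : ℝ) + 1 := by push_cast; ring
      rw [h1, h2]
      ring
    have hH : Summable (fun n : ℕ =>
        (alphaSeq {m : ℕ | k ≤ m} n - alphaSeq Set.univ n) ^ 2) := by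
      rw [← summable_nat_add_iff k]
      exact ((hG.mul_left (1 / 4)).congr fun n => (halpha n).symm)
    show rho {n : ℕ | k ≤ n} Set.univ < ⊤
    rw [rho, ← ENNReal.ofReal_tsum_of_nonneg (fun n => sq_nonneg _) hH]
    exact ENNReal.ofReal_lt_top

end
end

section
/- For every g ∈ F and every natural number k, the set g·(ω∖{k}) belongs to F; moreover, ρ(g·(ω∖{k}), g) tends to 0 as k → ∞. -/
open MeasureTheory Filter Set
open scoped ENNReal

noncomputable section

section AuxProof

def hkf (k m : ℕ) : ℕ := if m < k then m else m + 1

lemma hkf_strictMono (k : ℕ) : StrictMono (hkf k) := by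
  intro a b hab; unfold hkf; split_ifs <;> omega

lemma range_hkf (k : ℕ) : Set.range (hkf k) = {n : ℕ | n ≠ k} := by
  ext n
  simp only [Set.mem_range, Set.mem_setOf_eq]
  constructor
  · rintro ⟨m, rfl⟩; unfold hkf; split_ifs <;> omega
  · intro hn
    rcases lt_or_gt_of_ne hn with h | h
    · exact ⟨n, by simp [hkf, h]⟩
    · exact ⟨n - 1, by unfold hkf; split_ifs <;> omega⟩

lemma ne_infinite (k : ℕ) : {n : ℕ | n ≠ k}.Infinite := by
  have : {n : ℕ | n ≠ k} = ({k} : Set ℕ)ᶜ := by ext n; simp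
  rw [this]
  exact (Set.finite_singleton k).infinite_compl

lemma fEnum_ne (k : ℕ) : fEnum {n : ℕ | n ≠ k} = hkf k := by
  have h1 : (setOf (· ∈ {n : ℕ | n ≠ k})).Infinite := ne_infinite k
  exact (StrictMono.range_inj (Nat.nth_strictMono h1) (hkf_strictMono k)).mp
    (by rw [Nat.range_nth_of_infinite h1, range_hkf]; rfl)

lemma mem_image_hkf {g : Set ℕ} {k n : ℕ} :
    n ∈ hkf k '' g ↔ (n < k ∧ n ∈ g) ∨ (k < n ∧ n - 1 ∈ g) := by
  constructor
  · rintro ⟨m, hm, rfl⟩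
    unfold hkf; split_ifs with h
    · exact Or.inl ⟨h, hm⟩
    · exact Or.inr ⟨by omega, by simpa using hm⟩
  · rintro (⟨h1, h2⟩ | ⟨h1, h2⟩)
    · exact ⟨n, h2, by simp [hkf, h1]⟩
    · exact ⟨n - 1, h2, by unfold hkf; split_ifs <;> omega⟩

lemma count_image_hkf_le {g : Set ℕ} [DecidablePred (· ∈ g)] {k : ℕ}
    [DecidablePred (· ∈ hkf k '' g)] {n : ℕ} (hn : n ≤ k) :
    Nat.count (· ∈ hkf k '' g) n = Nat.count (· ∈ g) n := by
  induction n with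
  | zero => simp
  | succ n ih =>
    rw [Nat.count_succ, Nat.count_succ, ih (by omega)]
    congr 1
    have : (n ∈ hkf k '' g) ↔ n ∈ g := by
      rw [mem_image_hkf]
      constructor
      · rintro (⟨_, h⟩ | ⟨h, _⟩)
        · exact h
        · exact absurd h (by omega)
      · intro h; exact Or.inl ⟨by omega, h⟩
    simp [this]

lemma count_image_hkf_gt {g : Set ℕ} [DecidablePred (· ∈ g)] {k : ℕ}
    [DecidablePred (· ∈ hkf k '' g)] {n : ℕ} (hn : k < n) :
    Nat.count (· ∈ hkf k '' g) n = Nat.count (· ∈ g) (n - 1) := by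
  induction n with
  | zero => omega
  | succ n ih =>
    rcases eq_or_lt_of_le (Nat.lt_succ_iff.mp hn) with h | h
    · subst h
      rw [Nat.count_succ, if_neg, Nat.add_zero, count_image_hkf_le le_rfl]
      · simp
      · rw [mem_image_hkf]; omega
    · have hmem : (n ∈ hkf k '' g) ↔ n - 1 ∈ g := by
        rw [mem_image_hkf]
        constructor
        · rintro (⟨h1, _⟩ | ⟨_, h2⟩)
          · exact absurd h1 (by omega)
          · exact h2
        · intro h2; exact Or.inr ⟨h, h2⟩
      have e1 : n - 1 + 1 = n := by omega
      rw [Nat.count_succ, ih h, show (n:ℕ) + 1 - 1 = n by omega, ← e1,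
        Nat.count_succ, e1]
      congr 1
      simp [hmem]

lemma alpha_image_hkf {g : Set ℕ} (k n : ℕ) :
    alphaSeq (hkf k '' g) n =
      if n < k then alphaSeq g n else if n = k then 1/4 else alphaSeq g (n - 1) := by
  classical
  simp only [alphaSeq]
  rcases lt_trichotomy n k with h | h | h
  · rw [if_pos h]
    have hm : (n ∈ hkf k '' g) ↔ n ∈ g := by
      rw [mem_image_hkf]
      constructor
      · rintro (⟨_, h2⟩ | ⟨h1, _⟩)
        · exact h2
        · exact absurd h1 (by omega)
      · intro h2; exact Or.inl ⟨h, h2⟩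
    by_cases hng : n ∈ g
    · rw [if_pos (hm.mpr hng), if_pos hng, count_image_hkf_le (le_of_lt h)]
    · rw [if_neg (fun c => hng (hm.mp c)), if_neg hng]
  · subst h
    rw [if_neg (lt_irrefl n), if_pos rfl, if_neg]
    rw [mem_image_hkf]; omega
  · rw [if_neg (show ¬ n < k by omega), if_neg (show ¬ n = k by omega)]
    have hm : (n ∈ hkf k '' g) ↔ n - 1 ∈ g := by
      rw [mem_image_hkf]
      constructor
      · rintro (⟨h1, _⟩ | ⟨_, h2⟩)
        · exact absurd h1 (by omega)
        · exact h2
      · intro h2; exact Or.inr ⟨h, h2⟩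
    by_cases hng : n - 1 ∈ g
    · rw [if_pos (hm.mpr hng), if_pos hng, count_image_hkf_gt h]
    · rw [if_neg (fun c => hng (hm.mp c)), if_neg hng]

lemma count_univ_eq (n : ℕ) (inst : DecidablePred (· ∈ (Set.univ : Set ℕ))) :
    @Nat.count _ inst n = n := by
  induction n with
  | zero => simp
  | succ n ih => rw [Nat.count_succ, ih, if_pos (Set.mem_univ n)]

lemma alpha_univ (n : ℕ) :
    alphaSeq Set.univ n = 1/4 + 1/(2 * Real.sqrt ((n:ℝ) + 1)) := by
  simp only [alphaSeq]
  rw [if_pos (Set.mem_univ n), count_univ_eq]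


lemma ofReal_sq_le2 (a b c : ℝ) :
    ENNReal.ofReal ((a - c)^2) ≤
      2 * ENNReal.ofReal ((a - b)^2) + 2 * ENNReal.ofReal ((b - c)^2) := by
  have h2 : (2 : ℝ≥0∞) = ENNReal.ofReal 2 := by norm_num
  rw [h2, ← ENNReal.ofReal_mul (by norm_num), ← ENNReal.ofReal_mul (by norm_num),
    ← ENNReal.ofReal_add (by positivity) (by positivity)]
  exact ENNReal.ofReal_le_ofReal (by nlinarith [sq_nonneg (a - 2*b + c)])

lemma ofReal_sq_le3 (a b c d : ℝ) :
    ENNReal.ofReal ((a - d)^2) ≤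
      3 * ENNReal.ofReal ((a - b)^2) + 3 * ENNReal.ofReal ((b - c)^2)
        + 3 * ENNReal.ofReal ((c - d)^2) := by
  have h3 : (3 : ℝ≥0∞) = ENNReal.ofReal 3 := by norm_num
  rw [h3, ← ENNReal.ofReal_mul (by norm_num), ← ENNReal.ofReal_mul (by norm_num),
    ← ENNReal.ofReal_mul (by norm_num),
    ← ENNReal.ofReal_add (by positivity) (by positivity),
    ← ENNReal.ofReal_add (by positivity) (by positivity)]
  refine ENNReal.ofReal_le_ofReal ?_
  nlinarith [sq_nonneg ((a-b) - (b-c)), sq_nonneg ((b-c) - (c-d)), sq_nonneg ((a-b) - (c-d))]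

lemma beta_diff_bound (n : ℕ) :
    (alphaSeq Set.univ n - alphaSeq Set.univ (n+1))^2 ≤ (1/((n:ℝ)+1))^2 := by
  rw [alpha_univ, alpha_univ]
  set a := Real.sqrt ((n:ℝ) + 1) with ha
  set b := Real.sqrt (((n:ℕ)+1:ℕ) + 1) with hb
  have hb' : b = Real.sqrt ((n:ℝ) + 2) := by rw [hb]; push_cast; ring_nf
  have ha2 : a^2 = (n:ℝ) + 1 := Real.sq_sqrt (by positivity)
  have hb2 : b^2 = (n:ℝ) + 2 := by rw [hb']; exact Real.sq_sqrt (by positivity)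
  have hapos : 0 < a := Real.sqrt_pos.mpr (by positivity)
  have hbpos : 0 < b := by rw [hb']; exact Real.sqrt_pos.mpr (by positivity)
  have hab : a ≤ b := by
    rw [hb']; exact Real.sqrt_le_sqrt (by norm_num)
  have hba1 : b ≤ a + 1 := by
    rw [hb', show (n:ℝ) + 2 = ((n:ℝ)+1) + 1 by ring]
    calc Real.sqrt (((n:ℝ)+1) + 1) ≤ Real.sqrt ((a+1)^2) := by
          apply Real.sqrt_le_sqrt; nlinarith
      _ = a + 1 := Real.sqrt_sq (by positivity)
  have key : (1/4 + 1/(2*a)) - (1/4 + 1/(2*b)) = (b - a)/(2*a*b) := by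
    field_simp; ring
  have hd0 : (0:ℝ) ≤ (b - a)/(2*a*b) := div_nonneg (by linarith) (by positivity)
  have hd1 : (b - a)/(2*a*b) ≤ 1/((n:ℝ)+1) := by
    apply div_le_div₀ (by positivity) (by linarith) (by positivity)
    nlinarith
  rw [key]
  exact pow_le_pow_left₀ hd0 hd1 2

lemma summable_inv_sq : Summable (fun n : ℕ => (1/((n:ℝ)+1))^2) := by
  have h := Real.summable_one_div_nat_pow.mpr (by norm_num : 1 < 2)
  have h2 := (summable_nat_add_iff 1).mpr h
  refine h2.congr fun n => ?_
  push_cast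
  rw [one_div, one_div, ← inv_pow]

lemma tsum_ofReal_le_of_summable {f g : ℕ → ℝ} (hfg : ∀ n, f n ≤ g n)
    (hg : ∀ n, 0 ≤ g n) (hsum : Summable g) :
    ∑' n, ENNReal.ofReal (f n) ≠ ⊤ := by
  have h1 : ∑' n, ENNReal.ofReal (f n) ≤ ∑' n, ENNReal.ofReal (g n) :=
    ENNReal.tsum_le_tsum fun n => ENNReal.ofReal_le_ofReal (hfg n)
  have h2 : ∑' n, ENNReal.ofReal (g n) = ENNReal.ofReal (∑' n, g n) :=
    (ENNReal.ofReal_tsum_of_nonneg hg hsum).symm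
  exact ne_top_of_le_ne_top (by rw [h2]; exact ENNReal.ofReal_ne_top) h1

lemma beta_tsum_ne_top :
    ∑' n : ℕ, ENNReal.ofReal ((alphaSeq Set.univ n - alphaSeq Set.univ (n+1))^2) ≠ ⊤ :=
  tsum_ofReal_le_of_summable beta_diff_bound (fun n => by positivity) summable_inv_sq

section Main

variable {g : Set ℕ}

lemma S_ne_top (hρ : rho g Set.univ ≠ ⊤) :
    ∑' n : ℕ, ENNReal.ofReal ((alphaSeq g n - alphaSeq g (n+1))^2) ≠ ⊤ := by
  set β := alphaSeq Set.univ with hβ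
  set α := alphaSeq g with hα
  have hle : ∀ n : ℕ, ENNReal.ofReal ((α n - α (n+1))^2) ≤
      3 * ENNReal.ofReal ((α n - β n)^2) + 3 * ENNReal.ofReal ((β n - β (n+1))^2)
        + 3 * ENNReal.ofReal ((α (n+1) - β (n+1))^2) := by
    intro n
    have := ofReal_sq_le3 (α n) (β n) (β (n+1)) (α (n+1))
    rwa [show (β (n+1) - α (n+1))^2 = (α (n+1) - β (n+1))^2 by ring] at this
  have h1 : ∑' n : ℕ, ENNReal.ofReal ((α n - β n)^2) ≠ ⊤ := hρ
  have h2 : ∑' n : ℕ, ENNReal.ofReal ((β n - β (n+1))^2) ≠ ⊤ := beta_tsum_ne_top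
  have h3 : ∑' n : ℕ, ENNReal.ofReal ((α (n+1) - β (n+1))^2) ≠ ⊤ := by
    refine ne_top_of_le_ne_top h1 ?_
    exact ENNReal.tsum_comp_le_tsum_of_injective
      (f := fun n : ℕ => n + 1) (add_left_injective 1) _
  have hne : 3 * (∑' n : ℕ, ENNReal.ofReal ((α n - β n)^2))
      + 3 * (∑' n : ℕ, ENNReal.ofReal ((β n - β (n+1))^2))
      + 3 * (∑' n : ℕ, ENNReal.ofReal ((α (n+1) - β (n+1))^2)) ≠ ⊤ :=
    ENNReal.add_ne_top.mpr ⟨ENNReal.add_ne_top.mpr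
      ⟨ENNReal.mul_ne_top (by norm_num) h1, ENNReal.mul_ne_top (by norm_num) h2⟩,
      ENNReal.mul_ne_top (by norm_num) h3⟩
  refine ne_top_of_le_ne_top hne ?_
  calc ∑' n : ℕ, ENNReal.ofReal ((α n - α (n+1))^2)
      ≤ ∑' n : ℕ, (3 * ENNReal.ofReal ((α n - β n)^2)
          + 3 * ENNReal.ofReal ((β n - β (n+1))^2)
          + 3 * ENNReal.ofReal ((α (n+1) - β (n+1))^2)) := ENNReal.tsum_le_tsum hle
    _ = 3 * (∑' n : ℕ, ENNReal.ofReal ((α n - β n)^2))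
          + 3 * (∑' n : ℕ, ENNReal.ofReal ((β n - β (n+1))^2))
          + 3 * (∑' n : ℕ, ENNReal.ofReal ((α (n+1) - β (n+1))^2)) := by
        rw [ENNReal.tsum_add, ENNReal.tsum_add, ENNReal.tsum_mul_left,
          ENNReal.tsum_mul_left, ENNReal.tsum_mul_left]

end Main


section Main2

variable {g : Set ℕ}

lemma dotOp_eq (hgI : g.Infinite) (k : ℕ) :
    dotOp g {n : ℕ | n ≠ k} = hkf k '' g := by
  unfold dotOp
  rw [Set.range_comp, fEnum_ne]
  have : Set.range (fEnum g) = g := Nat.range_nth_of_infinite hgI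
  rw [this]


lemma tsum_split (t : ℕ → ℝ≥0∞) (k : ℕ) :
    ∑' n, t n = ∑ i ∈ Finset.range k, t i + ∑' m, t (m + k) := by
  induction k with
  | zero => simp
  | succ k ih =>
    rw [ih, Finset.sum_range_succ]
    have h := tsum_eq_zero_add' (f := fun m => t (m + k)) ENNReal.summable
    simp only [zero_add] at h
    rw [h, ← add_assoc]
    congr 1
    apply tsum_congr; intro m; congr 1; omega

set_option maxHeartbeats 1000000 in
lemma rho_image (k : ℕ) :
    rho (hkf k '' g) g = ENNReal.ofReal ((1/4 - alphaSeq g k)^2)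
      + ∑' m : ℕ, ENNReal.ofReal ((alphaSeq g (m + k) - alphaSeq g (m + k + 1))^2) := by
  unfold rho
  set t : ℕ → ℝ≥0∞ := fun n => ENNReal.ofReal ((alphaSeq (hkf k '' g) n - alphaSeq g n)^2)
    with ht
  have hsplit : ∑' n, t n = ∑ i ∈ Finset.range k, t i + ∑' m, t (m + k) :=
    tsum_split t k
  have hzero : ∀ i ∈ Finset.range k, t i = 0 := by
    intro i hi
    simp only [ht]
    rw [alpha_image_hkf, if_pos (Finset.mem_range.mp hi)]
    simp
  have h0 : ∑' m, t (m + k) = t (0 + k) + ∑' m, t (m + 1 + k) :=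
    tsum_eq_zero_add' (f := fun m => t (m + k)) ENNReal.summable
  rw [hsplit, Finset.sum_eq_zero hzero, zero_add, h0, zero_add]
  congr 1
  · simp only [ht]
    rw [alpha_image_hkf, if_neg (lt_irrefl k), if_pos rfl]
  · apply tsum_congr
    intro m
    simp only [ht]
    rw [alpha_image_hkf, if_neg (show ¬ m + 1 + k < k by omega),
      if_neg (show ¬ m + 1 + k = k by omega), show m + 1 + k - 1 = m + k by omega,
      show m + 1 + k = m + k + 1 by omega]


end Main2

end AuxProof


/-- For `g ∈ F` and `k ∈ ω`, `g·(ω∖{k}) ∈ F`, and `ρ(g·(ω∖{k}), g) → 0`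
as `k → ∞`. -/
theorem dotOp_compl_singleton (g : Set ℕ) (hg : g ∈ Fset) :
    (∀ k : ℕ, dotOp g {n : ℕ | n ≠ k} ∈ Fset) ∧
    Filter.Tendsto (fun k : ℕ => rho (dotOp g {n : ℕ | n ≠ k}) g)
      Filter.atTop (nhds 0) := by
  obtain ⟨hgI, hgρ⟩ := hg
  have hρ' : rho g Set.univ ≠ ⊤ := hgρ.ne
  have hS := S_ne_top hρ'
  have hEq : ∀ k : ℕ, rho (dotOp g {n : ℕ | n ≠ k}) g
      = ENNReal.ofReal ((1/4 - alphaSeq g k)^2)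
        + ∑' m : ℕ, ENNReal.ofReal ((alphaSeq g (m + k) - alphaSeq g (m + k + 1))^2) := by
    intro k
    rw [dotOp_eq hgI k]
    exact rho_image k
  have hfin : ∀ k : ℕ, rho (dotOp g {n : ℕ | n ≠ k}) g ≠ ⊤ := by
    intro k
    rw [hEq k]
    refine ENNReal.add_ne_top.mpr ⟨ENNReal.ofReal_ne_top, ?_⟩
    refine ne_top_of_le_ne_top hS ?_
    exact ENNReal.tsum_comp_le_tsum_of_injective
      (f := fun m : ℕ => m + k) (add_left_injective k) _
  constructor
  · intro k
    refine ⟨?_, ?_⟩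
    · rw [dotOp_eq hgI k]
      exact hgI.image ((hkf_strictMono k).injective.injOn)
    · have h2 : rho (dotOp g {n : ℕ | n ≠ k}) Set.univ ≤
          2 * rho (dotOp g {n : ℕ | n ≠ k}) g + 2 * rho g Set.univ := by
        unfold rho
        rw [← ENNReal.tsum_mul_left, ← ENNReal.tsum_mul_left, ← ENNReal.tsum_add]
        exact ENNReal.tsum_le_tsum fun n => ofReal_sq_le2 _ _ _
      refine lt_of_le_of_lt h2 ?_
      exact ENNReal.add_lt_top.mpr
        ⟨ENNReal.mul_lt_top (by norm_num) (hfin k).lt_top,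
         ENNReal.mul_lt_top (by norm_num) hgρ⟩
  · rw [Filter.tendsto_congr hEq]
    have hb1 : Filter.Tendsto (fun k : ℕ => ENNReal.ofReal ((1/4 - alphaSeq Set.univ k)^2))
        Filter.atTop (nhds 0) := by
      have hreal : ∀ k : ℕ, (1/4 - alphaSeq Set.univ k)^2 ≤ 1/((k:ℝ)+1) := by
        intro k
        rw [alpha_univ]
        set a := Real.sqrt ((k:ℝ)+1) with ha
        have hapos : 0 < a := Real.sqrt_pos.mpr (by positivity)
        have ha2 : a^2 = (k:ℝ)+1 := Real.sq_sqrt (by positivity)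
        have : (1/4 - (1/4 + 1/(2*a)))^2 = 1/(4*a^2) := by field_simp; ring
        rw [this, ha2]
        rw [div_le_div_iff₀ (by positivity) (by positivity)]
        nlinarith
      rw [show (0 : ℝ≥0∞) = ENNReal.ofReal 0 by simp]
      apply ENNReal.tendsto_ofReal
      apply squeeze_zero (fun k => by positivity) hreal
      exact tendsto_one_div_add_atTop_nhds_zero_nat
    have hb2 : Filter.Tendsto
        (fun k : ℕ => ENNReal.ofReal ((alphaSeq g k - alphaSeq Set.univ k)^2))
        Filter.atTop (nhds 0) :=
      ENNReal.tendsto_atTop_zero_of_tsum_ne_top hρ'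
    have hone : Filter.Tendsto (fun k : ℕ => ENNReal.ofReal ((1/4 - alphaSeq g k)^2))
        Filter.atTop (nhds 0) := by
      have hub : ∀ k : ℕ, ENNReal.ofReal ((1/4 - alphaSeq g k)^2) ≤
          2 * ENNReal.ofReal ((1/4 - alphaSeq Set.univ k)^2)
            + 2 * ENNReal.ofReal ((alphaSeq g k - alphaSeq Set.univ k)^2) := by
        intro k
        have := ofReal_sq_le2 (1/4) (alphaSeq Set.univ k) (alphaSeq g k)
        rwa [show (alphaSeq Set.univ k - alphaSeq g k)^2
          = (alphaSeq g k - alphaSeq Set.univ k)^2 by ring] at this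
      have hu : Filter.Tendsto (fun k : ℕ =>
          2 * ENNReal.ofReal ((1/4 - alphaSeq Set.univ k)^2)
            + 2 * ENNReal.ofReal ((alphaSeq g k - alphaSeq Set.univ k)^2))
          Filter.atTop (nhds 0) := by
        have t1 := ENNReal.Tendsto.const_mul hb1 (Or.inr (by norm_num : (2:ℝ≥0∞) ≠ ⊤))
        have t2 := ENNReal.Tendsto.const_mul hb2 (Or.inr (by norm_num : (2:ℝ≥0∞) ≠ ⊤))
        simpa using t1.add t2
      exact tendsto_of_tendsto_of_tendsto_of_le_of_le tendsto_const_nhds hu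
        (fun k => zero_le) hub
    have htwo : Filter.Tendsto (fun k : ℕ =>
        ∑' m : ℕ, ENNReal.ofReal ((alphaSeq g (m + k) - alphaSeq g (m + k + 1))^2))
        Filter.atTop (nhds 0) :=
      ENNReal.tendsto_sum_nat_add
        (fun n => ENNReal.ofReal ((alphaSeq g n - alphaSeq g (n+1))^2)) hS
    simpa using hone.add htwo


end
end

section
/- Let x be an infinite set of natural numbers and y an infinite subset of x. If the complement of f_x⁻¹(y) in ω is not in the summable ideal, i.e., Σ_{n ∈ ω∖f_x⁻¹(y)} 1/(n+1) = ∞, then ρ(y,x) = ∞. -/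
open MeasureTheory Filter Set
open scoped ENNReal

noncomputable section

/-- If `x ∈ [ω]^ω`, `y ∈ [x]^ω`, and the complement of `f_x⁻¹(y)` is not in the
summable ideal, i.e. `Σ_{n ∉ f_x⁻¹(y)} 1/(n+1) = ∞`, then `ρ(y,x) = ∞`. -/
theorem rho_eq_top_of_not_summable (x y : Set ℕ)
    (hx : x.Infinite) (hy : y.Infinite) (hyx : y ⊆ x)
    (h : (∑' n : {n : ℕ // fEnum x n ∉ y},
        ENNReal.ofReal (1 / (((n : ℕ) : ℝ) + 1))) = ⊤) :
    rho y x = ⊤ := by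
  classical
  set g : ℕ → ℝ≥0∞ := fun n => ENNReal.ofReal ((alphaSeq y n - alphaSeq x n) ^ 2) with hg
  have hinj : Function.Injective
      (fun k : {n : ℕ // fEnum x n ∉ y} => fEnum x (k : ℕ)) := by
    intro a b hab
    exact Subtype.ext (Nat.nth_injective hx hab)
  have hterm : ∀ k : {n : ℕ // fEnum x n ∉ y},
      g (fEnum x (k : ℕ)) =
        ENNReal.ofReal (1 / 4) * ENNReal.ofReal (1 / (((k : ℕ) : ℝ) + 1)) := by
    intro k
    have hmem : fEnum x (k : ℕ) ∈ x := Nat.nth_mem_of_infinite hx (k : ℕ)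
    have hcount : Nat.count (· ∈ x) (fEnum x (k : ℕ)) = (k : ℕ) :=
      Nat.count_nth_of_infinite (p := (· ∈ x)) hx (k : ℕ)
    have hk1 : (0 : ℝ) < ((k : ℕ) : ℝ) + 1 := by positivity
    have hsq : Real.sqrt (((k : ℕ) : ℝ) + 1) ^ 2 = ((k : ℕ) : ℝ) + 1 :=
      Real.sq_sqrt hk1.le
    have halphay : alphaSeq y (fEnum x (k : ℕ)) = 1 / 4 := by
      simp [alphaSeq, k.2]
    have halphax : alphaSeq x (fEnum x (k : ℕ)) =
        1 / 4 + 1 / (2 * Real.sqrt (((k : ℕ) : ℝ) + 1)) := by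
      simp [alphaSeq, hmem, hcount]
    have hsqpos : (0 : ℝ) < Real.sqrt (((k : ℕ) : ℝ) + 1) := Real.sqrt_pos.2 hk1
    have hval : (alphaSeq y (fEnum x (k : ℕ)) - alphaSeq x (fEnum x (k : ℕ))) ^ 2
        = (1 / 4) * (1 / (((k : ℕ) : ℝ) + 1)) := by
      rw [halphay, halphax]
      have : (1 / 4 - (1 / 4 + 1 / (2 * Real.sqrt (((k : ℕ) : ℝ) + 1)))) ^ 2
          = (1 / (2 * Real.sqrt (((k : ℕ) : ℝ) + 1))) ^ 2 := by ring
      rw [this, div_pow, mul_pow, hsq]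
      norm_num
      ring
    rw [hg]
    simp only
    rw [hval, ENNReal.ofReal_mul (by norm_num)]
  have hle : ∑' k : {n : ℕ // fEnum x n ∉ y}, g (fEnum x (k : ℕ)) ≤ rho y x :=
    ENNReal.tsum_comp_le_tsum_of_injective hinj g
  have htop : ∑' k : {n : ℕ // fEnum x n ∉ y}, g (fEnum x (k : ℕ)) = ⊤ := by
    rw [tsum_congr hterm, ENNReal.tsum_mul_left, h, ENNReal.mul_top]
    simp [ENNReal.ofReal_eq_zero]
  rw [htop] at hle
  exact top_le_iff.mp hle

end
end

section
/- For every infinite set x of natural numbers, consider the equivalence relation ∼^x on [x]^ω defined by z ∼^x y iff μ^z and μ^y are equivalent measures. Then every ∼^x-equivalence class is both dense and meagre in [x]^ω (with the topology [x]^ω inherits as a subspace of Cantor space via characteristic functions). -/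
open MeasureTheory Filter Set
open scoped ENNReal

noncomputable section

namespace KakAux

noncomputable def wt (a : ℝ) : Bool → ℝ := fun b => if b = false then a else 1 - a

def XF : Bool → ℝ := fun b => if b = false then 1 else 0

noncomputable def W (α : ℕ → ℝ) (N : ℕ) (f : Fin N → Bool) : ℝ := ∏ i : Fin N, wt (α i.1) (f i)

def Bdd (α : ℕ → ℝ) : Prop := ∀ n, (1:ℝ)/4 ≤ α n ∧ α n ≤ 3/4

lemma wt_nonneg {α : ℕ → ℝ} (hα : Bdd α) (n : ℕ) (b : Bool) : 0 ≤ wt (α n) b := by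
  rcases hα n with ⟨h1, h2⟩
  cases b <;> simp [wt] <;> linarith

lemma wt_pos {α : ℕ → ℝ} (hα : Bdd α) (n : ℕ) (b : Bool) : (0:ℝ) < wt (α n) b := by
  rcases hα n with ⟨h1, h2⟩
  cases b <;> simp [wt] <;> linarith

lemma wt_sum {a : ℝ} : wt a false + wt a true = 1 := by simp [wt]

lemma W_nonneg {α : ℕ → ℝ} (hα : Bdd α) (N : ℕ) (f : Fin N → Bool) : 0 ≤ W α N f :=
  Finset.prod_nonneg fun i _ => wt_nonneg hα i (f i)

lemma W_pos {α : ℕ → ℝ} (hα : Bdd α) (N : ℕ) (f : Fin N → Bool) : 0 < W α N f :=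
  Finset.prod_pos fun i _ => wt_pos hα i (f i)

lemma sum_cube {N : ℕ} (ψ : Fin N → Bool → ℝ) :
    ∑ f : Fin N → Bool, ∏ i, ψ i (f i) = ∏ i, (ψ i false + ψ i true) := by
  classical
  have h := Finset.prod_univ_sum (fun _ : Fin N => (Finset.univ : Finset Bool)) ψ
  rw [Fintype.piFinset_univ] at h
  rw [← h]
  refine Finset.prod_congr rfl fun i _ => ?_
  rw [Fintype.sum_bool]; ring

lemma sum_W_univ {α : ℕ → ℝ} (N : ℕ) : ∑ f : Fin N → Bool, W α N f = 1 := by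
  have : ∑ f : Fin N → Bool, W α N f = ∏ i : Fin N, (wt (α i.1) false + wt (α i.1) true) :=
    sum_cube _
  rw [this]
  simp [wt_sum]


lemma Eij {α : ℕ → ℝ} (N : ℕ) (i j : Fin N) :
    ∑ f : Fin N → Bool, W α N f * ((XF (f i) - α i.1) * (XF (f j) - α j.1))
      = if i = j then α i.1 * (1 - α i.1) else 0 := by
  classical
  set ψ : Fin N → Bool → ℝ := fun k b =>
    wt (α k.1) b * ((if k = i then XF b - α i.1 else 1) * (if k = j then XF b - α j.1 else 1))
    with hψ
  have claim1 : ∀ f : Fin N → Bool,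
      ∏ k, ψ k (f k) = W α N f * ((XF (f i) - α i.1) * (XF (f j) - α j.1)) := by
    intro f
    rw [hψ]
    simp only [Finset.prod_mul_distrib]
    congr 1
    congr 1
    · exact (Finset.prod_eq_single i (fun b _ hb => if_neg hb)
        (fun h => absurd (Finset.mem_univ i) h)).trans (if_pos rfl)
    · exact (Finset.prod_eq_single j (fun b _ hb => if_neg hb)
        (fun h => absurd (Finset.mem_univ j) h)).trans (if_pos rfl)
  rw [← Finset.sum_congr rfl fun f _ => (claim1 f), sum_cube ψ]
  by_cases hij : i = j
  · subst hij
    rw [if_pos rfl]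
    rw [Finset.prod_eq_single i (fun k _ hk => ?_) (fun h => absurd (Finset.mem_univ i) h)]
    · rw [hψ]
      simp only [if_pos rfl]
      simp [wt, XF]
      ring
    · rw [hψ]
      simp only [if_neg hk]
      simp [wt]
  · rw [if_neg hij]
    refine Finset.prod_eq_zero (Finset.mem_univ i) ?_
    rw [hψ]
    simp only [if_pos rfl, if_neg hij]
    simp [wt, XF]
    ring

lemma second_moment {α : ℕ → ℝ} (c : ℕ → ℝ) (N : ℕ) :
    ∑ f : Fin N → Bool, W α N f * (∑ i : Fin N, c i.1 * (XF (f i) - α i.1))^2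
      = ∑ i : Fin N, (c i.1)^2 * (α i.1 * (1 - α i.1)) := by
  classical
  have expand : ∀ f : Fin N → Bool,
      W α N f * (∑ i : Fin N, c i.1 * (XF (f i) - α i.1))^2
        = ∑ i : Fin N, ∑ j : Fin N,
            (c i.1 * c j.1) * (W α N f * ((XF (f i) - α i.1) * (XF (f j) - α j.1))) := by
    intro f
    rw [sq, Finset.sum_mul_sum, Finset.mul_sum]
    refine Finset.sum_congr rfl fun i _ => ?_
    rw [Finset.mul_sum]
    refine Finset.sum_congr rfl fun j _ => ?_
    ring
  rw [Finset.sum_congr rfl fun f _ => expand f, Finset.sum_comm]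
  refine Finset.sum_congr rfl fun i _ => ?_
  rw [Finset.sum_comm]
  have : ∀ j : Fin N, (∑ f : Fin N → Bool,
      (c i.1 * c j.1) * (W α N f * ((XF (f i) - α i.1) * (XF (f j) - α j.1))))
      = if i = j then (c i.1 * c j.1) * (α i.1 * (1 - α i.1)) else 0 := by
    intro j
    rw [← Finset.mul_sum, Eij]
    split_ifs <;> simp
  rw [Finset.sum_congr rfl fun j _ => this j]
  rw [Finset.sum_ite_eq Finset.univ i (fun j => (c i.1 * c j.1) * (α i.1 * (1 - α i.1)))]
  rw [if_pos (Finset.mem_univ i)]; ring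


lemma cube_cheb {α : ℕ → ℝ} (hα : Bdd α) (c : ℕ → ℝ) (N : ℕ) {t : ℝ} (ht : 0 < t)
    (T : Finset (Fin N → Bool))
    (hT : ∀ f ∈ T, t ≤ |(∑ i : Fin N, c i.1 * XF (f i)) - ∑ i : Fin N, c i.1 * α i.1|) :
    ∑ f ∈ T, W α N f ≤ (∑ i : Fin N, (c i.1)^2) / (4 * t^2) := by
  classical
  have ht2 : (0:ℝ) < t^2 := by positivity
  have hdelta : ∀ f : Fin N → Bool,
      (∑ i : Fin N, c i.1 * XF (f i)) - ∑ i : Fin N, c i.1 * α i.1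
        = ∑ i : Fin N, c i.1 * (XF (f i) - α i.1) := by
    intro f; rw [← Finset.sum_sub_distrib]; exact Finset.sum_congr rfl fun i _ => by ring
  have step1 : ∀ f ∈ T, W α N f
      ≤ W α N f * ((∑ i : Fin N, c i.1 * (XF (f i) - α i.1))^2 / t^2) := by
    intro f hf
    have h1 := hT f hf
    rw [hdelta f] at h1
    have h2 : t^2 ≤ (∑ i : Fin N, c i.1 * (XF (f i) - α i.1))^2 := by
      have h3 := pow_le_pow_left₀ ht.le h1 2
      rwa [sq_abs] at h3
    have hW := W_nonneg hα N f
    rw [← mul_div_assoc, le_div_iff₀ ht2]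
    exact mul_le_mul_of_nonneg_left h2 hW
  calc ∑ f ∈ T, W α N f
      ≤ ∑ f ∈ T, W α N f * ((∑ i : Fin N, c i.1 * (XF (f i) - α i.1))^2 / t^2) :=
        Finset.sum_le_sum step1
    _ ≤ ∑ f : Fin N → Bool, W α N f * ((∑ i : Fin N, c i.1 * (XF (f i) - α i.1))^2 / t^2) := by
        apply Finset.sum_le_sum_of_subset_of_nonneg (Finset.subset_univ T)
        intro f _ _
        exact mul_nonneg (W_nonneg hα N f) (by positivity)
    _ = (∑ f : Fin N → Bool, W α N f * (∑ i : Fin N, c i.1 * (XF (f i) - α i.1))^2) / t^2 := by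
        rw [Finset.sum_div]
        exact Finset.sum_congr rfl fun f _ => by ring
    _ = (∑ i : Fin N, (c i.1)^2 * (α i.1 * (1 - α i.1))) / t^2 := by rw [second_moment]
    _ ≤ (∑ i : Fin N, (c i.1)^2) / (4 * t^2) := by
        have hsum : ∑ i : Fin N, (c i.1)^2 * (α i.1 * (1 - α i.1))
            ≤ (∑ i : Fin N, (c i.1)^2) * (1/4) := by
          rw [Finset.sum_mul]
          apply Finset.sum_le_sum; intro i _
          have ha := hα i.1
          nlinarith [sq_nonneg (c i.1), sq_nonneg (1 - 2*α i.1),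
            mul_nonneg (sq_nonneg (c i.1)) (sq_nonneg (1 - 2*α i.1))]
        rw [div_le_div_iff₀ ht2 (by positivity)]
        nlinarith [mul_le_mul_of_nonneg_right hsum (le_of_lt (by positivity : (0:ℝ) < 4*t^2))]

lemma cube_CS {α β : ℕ → ℝ} (hα : Bdd α) (hβ : Bdd β) {B : ℝ}
    (hB : ∀ N, ∑ n ∈ Finset.range N, (α n - β n)^2 ≤ B)
    (N : ℕ) (T : Finset (Fin N → Bool)) :
    ∑ f ∈ T, W β N f ≤ Real.exp (3*B) * Real.sqrt (∑ f ∈ T, W α N f) := by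
  classical
  have factor : ∀ n : ℕ,
      (wt (β n) false)^2/(wt (α n) false) + (wt (β n) true)^2/(wt (α n) true)
        ≤ Real.exp (6 * (α n - β n)^2) := by
    intro n
    have ha := hα n
    have hb := hβ n
    have ha0 : (0:ℝ) < α n := by linarith [ha.1]
    have ha1 : (0:ℝ) < 1 - α n := by linarith [ha.2]
    have key : (β n)^2/(α n) + (1 - β n)^2/(1 - α n) ≤ 1 + 6 * (α n - β n)^2 := by
      rw [div_add_div _ _ ha0.ne' ha1.ne', div_le_iff₀ (by positivity)]
      nlinarith [sq_nonneg (α n - β n),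
        mul_nonneg (mul_nonneg (by linarith [ha.1] : (0:ℝ) ≤ α n - 1/4)
          (by linarith [ha.2] : (0:ℝ) ≤ 3/4 - α n)) (sq_nonneg (α n - β n))]
    have hexp := Real.add_one_le_exp (6 * (α n - β n)^2)
    have e1 : wt (β n) false = β n := by simp [wt]
    have e2 : wt (β n) true = 1 - β n := by simp [wt]
    have e3 : wt (α n) false = α n := by simp [wt]
    have e4 : wt (α n) true = 1 - α n := by simp [wt]
    rw [e1, e2, e3, e4]
    linarith
  have sumratio : ∑ f : Fin N → Bool, (W β N f)^2 / W α N f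
      = ∏ i : Fin N, ((wt (β i.1) false)^2/(wt (α i.1) false)
          + (wt (β i.1) true)^2/(wt (α i.1) true)) := by
    rw [← sum_cube (fun i b => (wt (β i.1) b)^2/(wt (α i.1) b))]
    refine Finset.sum_congr rfl fun f _ => ?_
    rw [W, W, ← Finset.prod_pow, ← Finset.prod_div_distrib]
  have hprodle : ∑ f : Fin N → Bool, (W β N f)^2 / W α N f ≤ Real.exp (6*B) := by
    rw [sumratio]
    calc ∏ i : Fin N, ((wt (β i.1) false)^2/(wt (α i.1) false)
          + (wt (β i.1) true)^2/(wt (α i.1) true))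
        ≤ ∏ i : Fin N, Real.exp (6 * (α i.1 - β i.1)^2) := by
          apply Finset.prod_le_prod
          · intro i _
            have := wt_pos hα i.1 false
            have := wt_pos hα i.1 true
            positivity
          · intro i _; exact factor i.1
      _ = Real.exp (∑ i : Fin N, 6 * (α i.1 - β i.1)^2) := (Real.exp_sum _ _).symm
      _ ≤ Real.exp (6*B) := by
          apply Real.exp_le_exp.2
          have : ∑ i : Fin N, 6 * (α i.1 - β i.1)^2
              = 6 * ∑ n ∈ Finset.range N, (α n - β n)^2 := by
            rw [Finset.mul_sum, Fin.sum_univ_eq_sum_range (fun n => 6 * (α n - β n)^2) N]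
          rw [this]
          linarith [hB N]
  have hTα : (0:ℝ) ≤ ∑ f ∈ T, W α N f := Finset.sum_nonneg fun f _ => W_nonneg hα N f
  have hTβ : (0:ℝ) ≤ ∑ f ∈ T, W β N f := Finset.sum_nonneg fun f _ => W_nonneg hβ N f
  have hCS := Finset.sum_mul_sq_le_sq_mul_sq T
    (fun f => W β N f / Real.sqrt (W α N f)) (fun f => Real.sqrt (W α N f))
  have hrw : ∀ f : Fin N → Bool,
      (W β N f / Real.sqrt (W α N f)) * Real.sqrt (W α N f) = W β N f := by
    intro f
    rw [div_mul_cancel₀]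
    exact (Real.sqrt_pos.2 (W_pos hα N f)).ne'
  have hrw2 : ∀ f : Fin N → Bool,
      (W β N f / Real.sqrt (W α N f))^2 = (W β N f)^2 / W α N f := by
    intro f
    rw [div_pow, Real.sq_sqrt (W_pos hα N f).le]
  have hrw3 : ∀ f : Fin N → Bool, (Real.sqrt (W α N f))^2 = W α N f := fun f =>
    Real.sq_sqrt (W_pos hα N f).le
  rw [Finset.sum_congr rfl fun f _ => hrw f, Finset.sum_congr rfl fun f _ => hrw2 f,
    Finset.sum_congr rfl fun f _ => hrw3 f] at hCS
  have hmid : ∑ f ∈ T, (W β N f)^2 / W α N f ≤ Real.exp (6*B) := by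
    refine le_trans ?_ hprodle
    apply Finset.sum_le_sum_of_subset_of_nonneg (Finset.subset_univ T)
    intro f _ _
    exact div_nonneg (sq_nonneg _) (W_pos hα N f).le
  have hsq : (∑ f ∈ T, W β N f)^2 ≤ Real.exp (6*B) * ∑ f ∈ T, W α N f := by
    calc (∑ f ∈ T, W β N f)^2 ≤ (∑ f ∈ T, (W β N f)^2 / W α N f) * ∑ f ∈ T, W α N f := hCS
      _ ≤ Real.exp (6*B) * ∑ f ∈ T, W α N f := mul_le_mul_of_nonneg_right hmid hTα
  calc ∑ f ∈ T, W β N f = Real.sqrt ((∑ f ∈ T, W β N f)^2) := (Real.sqrt_sq hTβ).symm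
    _ ≤ Real.sqrt (Real.exp (6*B) * ∑ f ∈ T, W α N f) := Real.sqrt_le_sqrt hsq
    _ = Real.exp (3*B) * Real.sqrt (∑ f ∈ T, W α N f) := by
        rw [Real.sqrt_mul (Real.exp_nonneg _)]
        congr 1
        rw [show (6:ℝ)*B = (3*B)+(3*B) by ring, Real.exp_add,
          Real.sqrt_mul_self (Real.exp_nonneg _)]


/-- cylinder set given by a finite set of admissible patterns -/
def cylF (N : ℕ) (T : Finset (Fin N → Bool)) : Set (ℕ → Bool) :=
  {g | (fun i : Fin N => g i.1) ∈ T}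

def CylProp (μ : Measure (ℕ → Bool)) (α : ℕ → ℝ) : Prop :=
  ∀ (s : Finset ℕ) (f : ℕ → Bool),
    μ {g | ∀ n ∈ s, g n = f n} = ∏ n ∈ s, ENNReal.ofReal (wt (α n) (f n))

def extN {N : ℕ} (f : Fin N → Bool) : ℕ → Bool := fun n => if h : n < N then f ⟨n, h⟩ else false

lemma measurable_cyl (s : Finset ℕ) (f : ℕ → Bool) :
    MeasurableSet {g : ℕ → Bool | ∀ n ∈ s, g n = f n} := by
  have : {g : ℕ → Bool | ∀ n ∈ s, g n = f n} = ⋂ n ∈ s, (fun g : ℕ → Bool => g n) ⁻¹' {f n} := by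
    ext g; simp
  rw [this]
  exact MeasurableSet.biInter s.countable_toSet
    (fun n _ => measurable_pi_apply n (measurableSet_singleton (f n)))

lemma cylF_eq_biUnion (N : ℕ) (T : Finset (Fin N → Bool)) :
    cylF N T = ⋃ f ∈ T, {g : ℕ → Bool | ∀ n ∈ Finset.range N, g n = extN f n} := by
  ext g
  simp only [cylF, mem_setOf_eq, mem_iUnion, Finset.mem_range, exists_prop]
  constructor
  · intro hg
    refine ⟨fun i : Fin N => g i.1, hg, fun n hn => ?_⟩
    simp only [extN]
    rw [dif_pos hn]
  · rintro ⟨f, hfT, hf⟩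
    have : (fun i : Fin N => g i.1) = f := by
      funext i
      have := hf i.1 i.isLt
      simpa [extN, i.isLt] using this
    rwa [this]

lemma measurable_cylF (N : ℕ) (T : Finset (Fin N → Bool)) : MeasurableSet (cylF N T) := by
  rw [cylF_eq_biUnion]
  exact MeasurableSet.biUnion T.countable_toSet fun f _ => measurable_cyl _ _

lemma compl_cylF (N : ℕ) (T : Finset (Fin N → Bool)) :
    (cylF N T)ᶜ = cylF N (Finset.univ \ T) := by
  ext g; simp [cylF]

lemma meas_cylF {μ : Measure (ℕ → Bool)} {α : ℕ → ℝ} (hc : CylProp μ α) (hα : Bdd α)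
    (N : ℕ) (T : Finset (Fin N → Bool)) :
    μ (cylF N T) = ENNReal.ofReal (∑ f ∈ T, W α N f) := by
  rw [cylF_eq_biUnion]
  rw [measure_biUnion_finset ?disj (fun f _ => measurable_cyl _ _)]
  case disj =>
    intro f hf f' hf' hne
    simp only [Function.onFun]
    rw [Set.disjoint_left]
    intro g hg hg'
    apply hne
    funext i
    have h1 := hg i.1 (Finset.mem_range.2 i.isLt)
    have h2 := hg' i.1 (Finset.mem_range.2 i.isLt)
    simp only [extN, dif_pos i.isLt] at h1 h2
    rw [← h1, ← h2]
  rw [ENNReal.ofReal_sum_of_nonneg (fun f _ => W_nonneg hα N f)]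
  refine Finset.sum_congr rfl fun f _ => ?_
  rw [hc (Finset.range N) (extN f)]
  rw [← ENNReal.ofReal_prod_of_nonneg (fun n _ => wt_nonneg hα n _)]
  congr 1
  rw [← Fin.prod_univ_eq_prod_range (fun n => wt (α n) (extN f n)) N]
  refine Finset.prod_congr rfl fun i _ => ?_
  congr 1
  simp [extN, i.isLt]

open scoped Classical in
/-- depth-`N` approximation of an open set -/
noncomputable def TofOpen (U : Set (ℕ → Bool)) (N : ℕ) : Finset (Fin N → Bool) :=
  Finset.univ.filter (fun f => {g : ℕ → Bool | ∀ i : Fin N, g i.1 = f i} ⊆ U)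

lemma mem_cylF_TofOpen {U : Set (ℕ → Bool)} {N : ℕ} {g : ℕ → Bool} :
    g ∈ cylF N (TofOpen U N) ↔ {h : ℕ → Bool | ∀ i : Fin N, h i.1 = g i.1} ⊆ U := by
  simp only [cylF, TofOpen, mem_setOf_eq, Finset.mem_filter, Finset.mem_univ, true_and]

lemma TofOpen_mono (U : Set (ℕ → Bool)) : Monotone (fun N => cylF N (TofOpen U N)) := by
  intro N M hNM g hg
  rw [mem_cylF_TofOpen] at hg ⊢
  intro h hh
  exact hg (fun i => hh ⟨i.1, lt_of_lt_of_le i.isLt hNM⟩)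

lemma iUnion_TofOpen {U : Set (ℕ → Bool)} (hU : IsOpen U) :
    ⋃ N, cylF N (TofOpen U N) = U := by
  apply Set.Subset.antisymm
  · refine Set.iUnion_subset fun N g hg => ?_
    rw [mem_cylF_TofOpen] at hg
    exact hg (fun i => rfl)
  · intro g hg
    obtain ⟨I, u, hu, hsub⟩ := isOpen_pi_iff.1 hU g hg
    refine Set.mem_iUnion.2 ⟨I.sup id + 1, ?_⟩
    rw [mem_cylF_TofOpen]
    intro h hh
    apply hsub
    intro a ha
    have haN : a < I.sup id + 1 := Nat.lt_succ_of_le (Finset.le_sup (f := id) ha)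
    have := hh ⟨a, haN⟩
    simp only at this
    rw [this]
    exact (hu a ha).2

theorem acOfBounded {μ ν : Measure (ℕ → Bool)} [IsProbabilityMeasure μ] [IsProbabilityMeasure ν]
    {α β : ℕ → ℝ} (hα : Bdd α) (hβ : Bdd β) (hcα : CylProp μ α) (hcβ : CylProp ν β)
    {B : ℝ} (hB : ∀ N, ∑ n ∈ Finset.range N, (α n - β n)^2 ≤ B) : ν ≪ μ := by
  have open_bound : ∀ U : Set (ℕ → Bool), IsOpen U →
      ν U ≤ ENNReal.ofReal (Real.exp (3*B) * Real.sqrt ((μ U).toReal)) := by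
    intro U hU
    conv_lhs => rw [← iUnion_TofOpen hU]
    rw [Directed.measure_iUnion ((TofOpen_mono U).directed_le)]
    refine iSup_le fun N => ?_
    rw [meas_cylF hcβ hβ]
    apply ENNReal.ofReal_le_ofReal
    refine le_trans (cube_CS hα hβ hB N (TofOpen U N)) ?_
    apply mul_le_mul_of_nonneg_left _ (Real.exp_nonneg _)
    apply Real.sqrt_le_sqrt
    have h1 : μ (cylF N (TofOpen U N)) ≤ μ U := by
      apply measure_mono
      conv_rhs => rw [← iUnion_TofOpen hU]
      exact Set.subset_iUnion (fun N => cylF N (TofOpen U N)) N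
    have h2 := meas_cylF hcα hα N (TofOpen U N)
    have h3 : (μ (cylF N (TofOpen U N))).toReal
        = ∑ f ∈ TofOpen U N, W α N f := by
      rw [h2, ENNReal.toReal_ofReal (Finset.sum_nonneg fun f _ => W_nonneg hα N f)]
    rw [← h3]
    exact ENNReal.toReal_mono (measure_ne_top μ U) h1
  refine Measure.AbsolutelyContinuous.mk fun A hA hA0 => ?_
  have key : ∀ ε : ℝ, 0 < ε → ν A ≤ ENNReal.ofReal (Real.exp (3*B) * Real.sqrt ε) := by
    intro ε hε
    obtain ⟨U, hAU, hUo, hUlt⟩ :=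
      Set.exists_isOpen_lt_of_lt A (ENNReal.ofReal ε) (by rw [hA0]; exact ENNReal.ofReal_pos.2 hε)
    calc ν A ≤ ν U := measure_mono hAU
      _ ≤ ENNReal.ofReal (Real.exp (3*B) * Real.sqrt ((μ U).toReal)) := open_bound U hUo
      _ ≤ ENNReal.ofReal (Real.exp (3*B) * Real.sqrt ε) := by
          apply ENNReal.ofReal_le_ofReal
          apply mul_le_mul_of_nonneg_left _ (Real.exp_nonneg _)
          apply Real.sqrt_le_sqrt
          have := ENNReal.toReal_mono (ENNReal.ofReal_ne_top) hUlt.le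
          rwa [ENNReal.toReal_ofReal hε.le] at this
  by_contra hν
  set r := (ν A).toReal with hr
  have hrpos : 0 < r := ENNReal.toReal_pos hν (measure_ne_top ν A)
  have hεpos : 0 < (r / (2 * Real.exp (3*B)))^2 := by positivity
  have h1 := key _ hεpos
  have h2 : Real.sqrt ((r / (2 * Real.exp (3*B)))^2) = r / (2 * Real.exp (3*B)) :=
    Real.sqrt_sq (by positivity)
  rw [h2] at h1
  have h3 : Real.exp (3*B) * (r / (2 * Real.exp (3*B))) = r/2 := by
    field_simp
  rw [h3] at h1
  have h4 : ν A = ENNReal.ofReal r := (ENNReal.ofReal_toReal (measure_ne_top ν A)).symm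
  rw [h4] at h1
  have h5 := (ENNReal.ofReal_le_ofReal_iff (by positivity)).1 h1
  linarith

theorem singOfDivergent {μ ν : Measure (ℕ → Bool)} [IsProbabilityMeasure μ]
    [IsProbabilityMeasure ν]
    {α β : ℕ → ℝ} (hα : Bdd α) (hβ : Bdd β) (hcα : CylProp μ α) (hcβ : CylProp ν β)
    (hdiv : ∀ R : ℝ, ∃ N, R ≤ ∑ n ∈ Finset.range N, (α n - β n)^2) :
    ∃ A : Set (ℕ → Bool), MeasurableSet A ∧ μ A = 0 ∧ ν A ≠ 0 := by
  classical
  set c : ℕ → ℝ := fun n => α n - β n with hc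
  set S : ℕ → ℝ := fun N => ∑ n ∈ Finset.range N, (c n)^2 with hS
  have hNj : ∀ j : ℕ, ∃ N, (2:ℝ)^(j+2) ≤ S N := fun j => hdiv _
  set Nj : ℕ → ℕ := fun j => (hNj j).choose with hNjdef
  have hSj : ∀ j, (2:ℝ)^(j+2) ≤ S (Nj j) := fun j => (hNj j).choose_spec
  have hSpos : ∀ j, 0 < S (Nj j) := fun j => lt_of_lt_of_le (by positivity) (hSj j)
  have hSfin : ∀ N, S N = ∑ i : Fin N, (c i.1)^2 := fun N =>
    (Fin.sum_univ_eq_sum_range (fun n => (c n)^2) N).symm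
  have hmdiff : ∀ N : ℕ, (∑ i : Fin N, c i.1 * α i.1) - (∑ i : Fin N, c i.1 * β i.1) = S N := by
    intro N
    rw [← Finset.sum_sub_distrib, hSfin]
    refine Finset.sum_congr rfl fun i _ => by rw [hc]; ring
  set T : ∀ N : ℕ, Finset (Fin N → Bool) := fun N =>
    Finset.univ.filter (fun f => ∑ i : Fin N, c i.1 * XF (f i)
      ≤ (∑ i : Fin N, c i.1 * β i.1) + S N / 2) with hT
  set A : Set (ℕ → Bool) := ⋂ j, cylF (Nj j) (T (Nj j)) with hA
  have hAmeas : MeasurableSet A := MeasurableSet.iInter fun j => measurable_cylF _ _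
  have hround : ∀ j, (∑ i : Fin (Nj j), (c i.1)^2) / (4 * (S (Nj j)/2)^2) ≤ (1/2)^(j+2) := by
    intro j
    rw [← hSfin]
    have h1 : (∑ i : Fin (Nj j), (c i.1)^2) = S (Nj j) := (hSfin _).symm
    have h2 := hSpos j
    have h3 := hSj j
    rw [div_le_iff₀ (by positivity)]
    have : (4 * (S (Nj j)/2)^2) = S (Nj j) * S (Nj j) := by ring
    rw [this]
    calc S (Nj j) = 1 * S (Nj j) := (one_mul _).symm
      _ ≤ ((1/2)^(j+2) * S (Nj j)) * S (Nj j) := by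
          apply mul_le_mul_of_nonneg_right _ h2.le
          rw [← mul_le_mul_iff_of_pos_left (show (0:ℝ) < (2:ℝ)^(j+2) by positivity)]
          calc (2:ℝ)^(j+2) * 1 = 2^(j+2) := mul_one _
            _ ≤ S (Nj j) := h3
            _ = (2:ℝ)^(j+2) * ((1/2)^(j+2) * S (Nj j)) := by
                rw [← mul_assoc]
                rw [show (2:ℝ)^(j+2) * (1/2)^(j+2) = 1 by
                  rw [← mul_pow]; norm_num]
                rw [one_mul]
      _ = (1/2)^(j+2) * (S (Nj j) * S (Nj j)) := by ring
  have bound1 : ∀ j, μ (cylF (Nj j) (T (Nj j))) ≤ ENNReal.ofReal ((1/2)^(j+2)) := by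
    intro j
    rw [meas_cylF hcα hα]
    apply ENNReal.ofReal_le_ofReal
    refine le_trans (cube_cheb hα c (Nj j) (t := S (Nj j)/2) (half_pos (hSpos j)) _ ?_) (hround j)
    intro f hf
    rw [hT, Finset.mem_filter] at hf
    have h1 := hf.2
    have h2 := hmdiff (Nj j)
    rw [le_abs]
    right
    linarith
  have bound2 : ∀ j, ν ((cylF (Nj j) (T (Nj j)))ᶜ) ≤ ENNReal.ofReal ((1/2)^(j+2)) := by
    intro j
    rw [compl_cylF, meas_cylF hcβ hβ]
    apply ENNReal.ofReal_le_ofReal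
    refine le_trans (cube_cheb hβ c (Nj j) (t := S (Nj j)/2) (half_pos (hSpos j)) _ ?_) ?_
    · intro f hf
      rw [Finset.mem_sdiff, hT, Finset.mem_filter] at hf
      have h1 : ¬ (∑ i : Fin (Nj j), c i.1 * XF (f i)
          ≤ (∑ i : Fin (Nj j), c i.1 * β i.1) + S (Nj j) / 2) := fun h =>
        hf.2 ⟨Finset.mem_univ f, h⟩
      push_neg at h1
      rw [le_abs]
      left
      linarith
    · exact hround j
  refine ⟨A, hAmeas, ?_, ?_⟩
  · have hle : ∀ j, μ A ≤ ENNReal.ofReal ((1/2)^(j+2)) := fun j =>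
      le_trans (measure_mono (Set.iInter_subset _ j)) (bound1 j)
    have htend : Tendsto (fun j : ℕ => ENNReal.ofReal ((1/2:ℝ)^(j+2))) atTop (nhds 0) := by
      rw [show (0:ℝ≥0∞) = ENNReal.ofReal 0 by simp]
      apply ENNReal.tendsto_ofReal
      have := tendsto_pow_atTop_nhds_zero_of_lt_one (by norm_num : (0:ℝ) ≤ 1/2)
        (by norm_num : (1/2:ℝ) < 1)
      exact this.comp (tendsto_add_atTop_nat 2)
    have := ge_of_tendsto htend (Filter.Eventually.of_forall hle)
    exact le_antisymm this (zero_le)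
  · intro h0
    have hcompl : Aᶜ = ⋃ j, (cylF (Nj j) (T (Nj j)))ᶜ := by rw [hA, Set.compl_iInter]
    have h1 : ν Aᶜ ≤ ∑' j, ENNReal.ofReal ((1/2:ℝ)^(j+2)) := by
      rw [hcompl]
      exact le_trans (measure_iUnion_le _) (ENNReal.tsum_le_tsum bound2)
    have h2 : ∑' j : ℕ, ENNReal.ofReal ((1/2:ℝ)^(j+2)) = 2⁻¹ := by
      have he : ∀ j : ℕ, ENNReal.ofReal ((1/2:ℝ)^(j+2)) = (2⁻¹ : ℝ≥0∞)^(j+2) := by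
        intro j
        rw [ENNReal.ofReal_pow (by norm_num)]
        congr 1
        rw [show (1/2 : ℝ) = (2 : ℝ)⁻¹ by norm_num]
        rw [ENNReal.ofReal_inv_of_pos (by norm_num)]
        congr 1
        norm_num
      rw [tsum_congr he]
      have : ∀ j : ℕ, (2⁻¹ : ℝ≥0∞)^(j+2) = (2⁻¹:ℝ≥0∞)^2 * (2⁻¹:ℝ≥0∞)^j := by
        intro j; rw [← pow_add]; ring_nf
      rw [tsum_congr this, ENNReal.tsum_mul_left, ENNReal.tsum_geometric]
      rw [ENNReal.one_sub_inv_two]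
      rw [show ((2:ℝ≥0∞)⁻¹)⁻¹ = 2 from inv_inv _]
      rw [show ((2:ℝ≥0∞)⁻¹)^2 * 2 = 2⁻¹ by
        rw [sq]
        rw [mul_assoc, ENNReal.inv_mul_cancel (by norm_num) (by norm_num), mul_one]]
    have h3 : ν Aᶜ = 1 := by
      rw [measure_compl hAmeas (measure_ne_top ν A), h0, measure_univ, tsub_zero]
    rw [h3, h2] at h1
    have : (1:ℝ≥0∞) ≤ 2⁻¹ := h1
    norm_num at this

def cnt (w : Set ℕ) (n : ℕ) : ℕ := @Nat.count (· ∈ w) (Classical.decPred _) n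

noncomputable def hfun (k : ℕ) : ℝ := 1/(2*Real.sqrt ((k:ℝ)+1))

lemma alphaSeq_def (w : Set ℕ) (n : ℕ) :
    alphaSeq w n = @ite _ (n ∈ w) (Classical.decPred (· ∈ w) n)
      (1/4 + hfun (cnt w n)) (1/4) := rfl

lemma sqrt_ge_one (k : ℕ) : 1 ≤ Real.sqrt ((k:ℝ)+1) := by
  have h1 : (1:ℝ) ≤ (k:ℝ)+1 := by linarith [Nat.cast_nonneg (α := ℝ) k]
  calc (1:ℝ) = Real.sqrt 1 := Real.sqrt_one.symm
    _ ≤ Real.sqrt ((k:ℝ)+1) := Real.sqrt_le_sqrt h1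

lemma sqrt_pos' (k : ℕ) : 0 < Real.sqrt ((k:ℝ)+1) :=
  lt_of_lt_of_le one_pos (sqrt_ge_one k)

lemma hfun_pos (k : ℕ) : 0 < hfun k := by
  have := sqrt_pos' k
  rw [hfun]; positivity

lemma hfun_le_half (k : ℕ) : hfun k ≤ 1/2 := by
  rw [hfun]
  rw [div_le_div_iff₀ (by have := sqrt_pos' k; linarith) (by norm_num)]
  have := sqrt_ge_one k
  linarith

lemma hfun_sq (k : ℕ) : (hfun k)^2 = 1/(4*((k:ℝ)+1)) := by
  rw [hfun, div_pow, mul_pow]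
  rw [Real.sq_sqrt (by positivity)]
  norm_num

lemma alphaSeq_bdd (w : Set ℕ) : Bdd (alphaSeq w) := by
  intro n
  rw [alphaSeq_def]
  split_ifs with h
  · have h1 := hfun_pos (cnt w n)
    have h2 := hfun_le_half (cnt w n)
    constructor <;> linarith
  · norm_num

lemma alphaSeq_mem {w : Set ℕ} {n : ℕ} (h : n ∈ w) :
    alphaSeq w n = 1/4 + hfun (cnt w n) := by rw [alphaSeq_def, if_pos h]

lemma alphaSeq_not_mem {w : Set ℕ} {n : ℕ} (h : n ∉ w) :
    alphaSeq w n = 1/4 := by rw [alphaSeq_def, if_neg h]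

lemma sq_diff_le_quarter {a b : ℝ} (ha : 1/4 ≤ a ∧ a ≤ 3/4) (hb : 1/4 ≤ b ∧ b ≤ 3/4) :
    (a - b)^2 ≤ 1/4 := by nlinarith [ha.1, ha.2, hb.1, hb.2]

lemma hfun_diff_sq_le (k d : ℕ) :
    (hfun k - hfun (k+d))^2 ≤ (d:ℝ)^2/((k:ℝ)+1)^3 := by
  have hcast : ((k+d:ℕ):ℝ) = (k:ℝ)+(d:ℝ) := by push_cast; ring
  rw [hfun, hfun, hcast]
  set s := Real.sqrt ((k:ℝ)+1) with hsdef
  set t := Real.sqrt ((k:ℝ)+(d:ℝ)+1) with htdef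
  have hd0 : (0:ℝ) ≤ (d:ℝ) := Nat.cast_nonneg d
  have hs1 : 1 ≤ s := sqrt_ge_one k
  have hs0 : 0 < s := lt_of_lt_of_le one_pos hs1
  have hs2 : s^2 = (k:ℝ)+1 := Real.sq_sqrt (by positivity)
  have ht2 : t^2 = (k:ℝ)+(d:ℝ)+1 := Real.sq_sqrt (by positivity)
  have hst : s ≤ t := Real.sqrt_le_sqrt (by linarith)
  have ht0 : 0 < t := lt_of_lt_of_le hs0 hst
  have e1 : 1/(2*s) - 1/(2*t) = (t - s)/(2*s*t) := by field_simp
  rw [e1]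
  have e2 : (t - s)*(t + s) = (d:ℝ) := by nlinarith [hs2, ht2]
  have e3 : t - s ≤ (d:ℝ)/(2*s) := by
    rw [show t - s = (d:ℝ)/(t+s) by rw [← e2]; field_simp]
    apply div_le_div_of_nonneg_left hd0 (by linarith) (by linarith)
  have e4 : (t - s)/(2*s*t) ≤ (d:ℝ)/(4*s^3) := by
    calc (t - s)/(2*s*t) ≤ ((d:ℝ)/(2*s))/(2*s*s) := by
          apply div_le_div₀ (by positivity) e3 (by nlinarith) (by nlinarith)
      _ = (d:ℝ)/((2*s)*(2*s*s)) := by rw [div_div]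
      _ = (d:ℝ)/(4*s^3) := by congr 1; ring
  have e5 : 0 ≤ (t - s)/(2*s*t) := by
    apply div_nonneg (by linarith) (by positivity)
  calc ((t - s)/(2*s*t))^2 ≤ ((d:ℝ)/(4*s^3))^2 := by
        apply pow_le_pow_left₀ e5 e4
    _ = (d:ℝ)^2/(16*(s^2)^3) := by rw [div_pow]; ring_nf
    _ ≤ (d:ℝ)^2/((k:ℝ)+1)^3 := by
        rw [hs2]
        apply div_le_div_of_nonneg_left (sq_nonneg _) (by positivity)
        nlinarith [pow_pos (show (0:ℝ) < (k:ℝ)+1 by positivity) 3]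

lemma hfun_shift_bound (p q e : ℕ) :
    (hfun (p + e) - hfun (q + e))^2
      ≤ ((max p q - min p q : ℕ):ℝ)^2 / ((e:ℝ)+1)^3 := by
  have symm_case : ∀ p q : ℕ, p ≤ q →
      (hfun (p + e) - hfun (q + e))^2 ≤ ((q - p : ℕ):ℝ)^2 / ((e:ℝ)+1)^3 := by
    intro p q hpq
    have : q + e = (p + e) + (q - p) := by omega
    rw [this]
    calc (hfun (p+e) - hfun ((p+e)+(q-p)))^2
        ≤ ((q-p:ℕ):ℝ)^2/(((p+e:ℕ):ℝ)+1)^3 := hfun_diff_sq_le (p+e) (q-p)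
      _ ≤ ((q-p:ℕ):ℝ)^2/((e:ℝ)+1)^3 := by
          apply div_le_div_of_nonneg_left (by positivity) (by positivity)
          have h : ((e:ℕ):ℝ) + 1 ≤ ((p+e:ℕ):ℝ)+1 := by push_cast; linarith [Nat.cast_nonneg (α := ℝ) p]
          exact pow_le_pow_left₀ (by positivity) h 3
  rcases le_total p q with h | h
  · rw [max_eq_right h, min_eq_left h]; exact symm_case p q h
  · rw [max_eq_left h, min_eq_right h]
    rw [show (hfun (p + e) - hfun (q + e))^2 = (hfun (q + e) - hfun (p + e))^2 by ring]
    exact symm_case q p h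

lemma basel_aux (K : ℕ) : ∑ k ∈ Finset.range (K+1), 1/(((k:ℝ)+1)^2) ≤ 2 - 1/((K:ℝ)+1) := by
  induction K with
  | zero => norm_num
  | succ K ih =>
    rw [Finset.sum_range_succ]
    have h1 : 1/(((K+1:ℕ):ℝ)+1)^2 ≤ 1/((K:ℝ)+1) - 1/(((K+1:ℕ):ℝ)+1) := by
      push_cast
      rw [div_sub_div _ _ (by positivity) (by positivity)]
      rw [div_le_div_iff₀ (by positivity) (by positivity)]
      ring_nf
      nlinarith [Nat.cast_nonneg (α := ℝ) K]
    push_cast at *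
    linarith

lemma basel (K : ℕ) : ∑ k ∈ Finset.range K, 1/(((k:ℝ)+1)^3) ≤ 2 := by
  have h1 : ∑ k ∈ Finset.range K, 1/(((k:ℝ)+1)^3) ≤ ∑ k ∈ Finset.range K, 1/(((k:ℝ)+1)^2) := by
    apply Finset.sum_le_sum
    intro k _
    apply div_le_div_of_nonneg_left (by norm_num) (by positivity)
    have hk : (1:ℝ) ≤ (k:ℝ)+1 := by linarith [Nat.cast_nonneg (α := ℝ) k]
    nlinarith
  rcases Nat.eq_zero_or_pos K with h | h
  · subst h; simp
  · obtain ⟨K', rfl⟩ := Nat.exists_eq_succ_of_ne_zero h.ne'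
    refine h1.trans ((basel_aux K').trans ?_)
    have : (0:ℝ) < (K':ℝ)+1 := by positivity
    have : 0 < 1/((K':ℝ)+1) := by positivity
    linarith


lemma cnt_mono (w : Set ℕ) {a b : ℕ} (h : a ≤ b) : cnt w a ≤ cnt w b :=
  (@Nat.count_monotone (· ∈ w) (Classical.decPred _)) h

lemma cnt_succ_mem {w : Set ℕ} {n : ℕ} (h : n ∈ w) : cnt w (n+1) = cnt w n + 1 := by
  rw [cnt, cnt, @Nat.count_succ (· ∈ w) (Classical.decPred _) n, if_pos h]

lemma cnt_succ_not_mem {w : Set ℕ} {n : ℕ} (h : n ∉ w) : cnt w (n+1) = cnt w n := by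
  rw [cnt, cnt, @Nat.count_succ (· ∈ w) (Classical.decPred _) n, if_neg h]
  omega

lemma cnt_le (w : Set ℕ) (n : ℕ) : cnt w n ≤ n := by
  induction n with
  | zero => exact le_of_eq (@Nat.count_zero (· ∈ w) (Classical.decPred _))
  | succ n ih =>
    by_cases h : n ∈ w
    · have := cnt_succ_mem h; omega
    · have := cnt_succ_not_mem h; omega

lemma cnt_lt_of_mem {w : Set ℕ} {n n' : ℕ} (hn : n ∈ w) (h : n < n') :
    cnt w n < cnt w n' := by
  have h1 : cnt w (n+1) = cnt w n + 1 := cnt_succ_mem hn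
  have h2 : cnt w (n+1) ≤ cnt w n' := cnt_mono w h
  omega

lemma cnt_tail_eq {f g : ℕ → Bool} {m : ℕ} (h : ∀ k, m < k → f k = g k) :
    ∀ n, m < n → cnt (toSet f) n - cnt (toSet f) (m+1)
      = cnt (toSet g) n - cnt (toSet g) (m+1) := by
  intro n hn
  rw [show m < n ↔ m + 1 ≤ n by omega] at hn
  induction n, hn using Nat.le_induction with
  | base => simp
  | succ n hn ih =>
    have hfg : f n = g n := h n (by omega)
    have m1 : cnt (toSet f) (m+1) ≤ cnt (toSet f) n := cnt_mono _ (by omega)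
    have m2 : cnt (toSet g) (m+1) ≤ cnt (toSet g) n := cnt_mono _ (by omega)
    by_cases hfn : f n = true
    · have h1 : cnt (toSet f) (n+1) = cnt (toSet f) n + 1 := cnt_succ_mem hfn
      have h2 : cnt (toSet g) (n+1) = cnt (toSet g) n + 1 :=
        cnt_succ_mem (show g n = true by rw [← hfg]; exact hfn)
      omega
    · have h1 : cnt (toSet f) (n+1) = cnt (toSet f) n := cnt_succ_not_mem hfn
      have h2 : cnt (toSet g) (n+1) = cnt (toSet g) n :=
        cnt_succ_not_mem (show ¬ g n = true by rw [← hfg]; exact hfn)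
      omega

lemma density_bound (zb wb : ℕ → Bool) (m : ℕ) :
    ∃ B : ℝ, ∀ N, ∑ n ∈ Finset.range N,
      (alphaSeq (toSet (fun n => if n ≤ m then wb n else zb n)) n
        - alphaSeq (toSet zb) n)^2 ≤ B := by
  classical
  set y : ℕ → Bool := fun n => if n ≤ m then wb n else zb n with hy
  set d1 := cnt (toSet y) (m+1) with hd1
  set d2 := cnt (toSet zb) (m+1) with hd2
  set dd := max d1 d2 - min d1 d2 with hdd
  set a := alphaSeq (toSet y) with ha
  set b := alphaSeq (toSet zb) with hb
  refine ⟨((m:ℝ)+1)/4 + ((dd:ℕ):ℝ)^2*2, fun N => ?_⟩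
  have htail : ∀ k, m < k → y k = zb k := fun k hk => if_neg (not_le.2 hk)
  set efn : ℕ → ℕ := fun n => cnt (toSet zb) n - d2 with hefn
  have hcnt_y : ∀ n, m < n → cnt (toSet y) n = d1 + efn n := by
    intro n hn
    have h1 := cnt_tail_eq htail n hn
    have h2 : d1 ≤ cnt (toSet y) n := cnt_mono _ (by omega)
    have h3 : d2 ≤ cnt (toSet zb) n := cnt_mono _ (by omega)
    simp only [hefn]
    omega
  have hcnt_z : ∀ n, m < n → cnt (toSet zb) n = d2 + efn n := by
    intro n hn
    have h3 : d2 ≤ cnt (toSet zb) n := cnt_mono _ (by omega)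
    simp only [hefn]
    omega
  have hterm : ∀ n, m < n →
      (a n - b n)^2 ≤ (if zb n = true then ((dd:ℕ):ℝ)^2/((efn n:ℝ)+1)^3 else 0) := by
    intro n hn
    by_cases hzn : zb n = true
    · rw [if_pos hzn]
      have hyn : y n = true := by rw [htail n hn]; exact hzn
      rw [ha, hb, alphaSeq_mem (show n ∈ toSet y from hyn),
        alphaSeq_mem (show n ∈ toSet zb from hzn)]
      rw [hcnt_y n hn, hcnt_z n hn]
      have := hfun_shift_bound d1 d2 (efn n)
      calc (1/4 + hfun (d1 + efn n) - (1/4 + hfun (d2 + efn n)))^2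
          = (hfun (d1 + efn n) - hfun (d2 + efn n))^2 := by ring
        _ ≤ ((max d1 d2 - min d1 d2 : ℕ):ℝ)^2 / ((efn n:ℝ)+1)^3 := this
        _ = ((dd:ℕ):ℝ)^2/((efn n:ℝ)+1)^3 := by rw [hdd]
    · rw [if_neg hzn]
      have hyn : ¬ y n = true := by rw [htail n hn]; exact hzn
      rw [ha, hb, alphaSeq_not_mem (show n ∉ toSet y from hyn),
        alphaSeq_not_mem (show n ∉ toSet zb from hzn)]
      simp
  have hsplit := Finset.sum_filter_add_sum_filter_not (Finset.range N)
    (fun n => n ≤ m) (fun n => (a n - b n)^2)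
  rw [← hsplit]
  have bound1 : ∑ n ∈ (Finset.range N).filter (fun n => n ≤ m), (a n - b n)^2
      ≤ ((m:ℝ)+1)/4 := by
    calc ∑ n ∈ (Finset.range N).filter (fun n => n ≤ m), (a n - b n)^2
        ≤ ∑ _n ∈ (Finset.range N).filter (fun n => n ≤ m), (1/4:ℝ) :=
          Finset.sum_le_sum fun n _ =>
            sq_diff_le_quarter (alphaSeq_bdd _ n) (alphaSeq_bdd _ n)
      _ = (((Finset.range N).filter (fun n => n ≤ m)).card : ℝ) * (1/4) := by
          rw [Finset.sum_const, nsmul_eq_mul]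
      _ ≤ ((m:ℝ)+1)/4 := by
          have hsub : (Finset.range N).filter (fun n => n ≤ m) ⊆ Finset.range (m+1) := by
            intro n hn
            rw [Finset.mem_filter] at hn
            exact Finset.mem_range.2 (by omega)
          have hcard := Finset.card_le_card hsub
          rw [Finset.card_range] at hcard
          have : ((((Finset.range N).filter (fun n => n ≤ m)).card :ℝ)) ≤ (m:ℝ)+1 := by
            exact_mod_cast hcard
          linarith
  have bound2 : ∑ n ∈ (Finset.range N).filter (fun n => ¬ n ≤ m), (a n - b n)^2
      ≤ ((dd:ℕ):ℝ)^2*2 := by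
    calc ∑ n ∈ (Finset.range N).filter (fun n => ¬ n ≤ m), (a n - b n)^2
        ≤ ∑ n ∈ (Finset.range N).filter (fun n => ¬ n ≤ m),
            (if zb n = true then ((dd:ℕ):ℝ)^2/((efn n:ℝ)+1)^3 else 0) := by
          apply Finset.sum_le_sum
          intro n hn
          rw [Finset.mem_filter] at hn
          exact hterm n (by omega)
      _ = ∑ n ∈ ((Finset.range N).filter (fun n => ¬ n ≤ m)).filter (fun n => zb n = true),
            ((dd:ℕ):ℝ)^2/((efn n:ℝ)+1)^3 := (Finset.sum_filter _ _).symm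
      _ = ∑ k ∈ (((Finset.range N).filter (fun n => ¬ n ≤ m)).filter
            (fun n => zb n = true)).image efn, ((dd:ℕ):ℝ)^2/((k:ℝ)+1)^3 := by
          rw [Finset.sum_image]
          intro n hn n' hn' hee
          simp only [Finset.mem_coe, Finset.mem_filter] at hn hn'
          by_contra hne
          rcases Nat.lt_or_ge n n' with hlt | hge
          · have := cnt_lt_of_mem (show n ∈ toSet zb from hn.2) hlt
            have h3 : d2 ≤ cnt (toSet zb) n := cnt_mono _ (by omega)
            simp only [hefn] at hee
            omega
          · have hlt : n' < n := by omega
            have := cnt_lt_of_mem (show n' ∈ toSet zb from hn'.2) hlt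
            have h3 : d2 ≤ cnt (toSet zb) n' := cnt_mono _ (by omega)
            simp only [hefn] at hee
            omega
      _ ≤ ∑ k ∈ Finset.range N, ((dd:ℕ):ℝ)^2/((k:ℝ)+1)^3 := by
          apply Finset.sum_le_sum_of_subset_of_nonneg
          · intro k hk
            rw [Finset.mem_image] at hk
            obtain ⟨n, hn, rfl⟩ := hk
            simp only [Finset.mem_filter, Finset.mem_range] at hn
            have h1 : efn n ≤ cnt (toSet zb) n := by simp only [hefn]; omega
            have h2 := cnt_le (toSet zb) n
            exact Finset.mem_range.2 (by omega)
          · intro k _ _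
            positivity
      _ = ((dd:ℕ):ℝ)^2 * ∑ k ∈ Finset.range N, 1/((k:ℝ)+1)^3 := by
          rw [Finset.mul_sum]
          exact Finset.sum_congr rfl fun k _ => by rw [mul_one_div]
      _ ≤ ((dd:ℕ):ℝ)^2*2 := by
          have := basel N
          have h0 : (0:ℝ) ≤ ((dd:ℕ):ℝ)^2 := sq_nonneg _
          nlinarith
  linarith

lemma block_divergence (zb : ℕ → Bool) (hz : (toSet zb).Infinite) (m : ℕ) (R : ℝ) :
    ∃ M, m ≤ M ∧ ∀ fb : ℕ → Bool, (∀ n, m < n → n ≤ M → fb n = false) →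
      R ≤ ∑ n ∈ Finset.range (M+1), (alphaSeq (toSet fb) n - alphaSeq (toSet zb) n)^2 := by
  classical
  set c0 := cnt (toSet zb) (m+1) with hc0
  have hev := Filter.tendsto_atTop.1 Real.tendsto_sum_range_one_div_nat_succ_atTop
    (4*R + ∑ i ∈ Finset.range c0, 1/((i:ℝ)+1))
  obtain ⟨K, hK⟩ := Filter.eventually_atTop.1 hev
  have hzset : {n | (fun k => k ∈ toSet zb) n}.Infinite := hz
  set M := max m (Nat.nth (· ∈ toSet zb) K) with hM
  refine ⟨M, le_max_left _ _, ?_⟩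
  set c1 := cnt (toSet zb) (M+1) with hc1
  have hKc1 : K ≤ c1 := by
    have h1 : cnt (toSet zb) (Nat.nth (· ∈ toSet zb) K + 1)
        = cnt (toSet zb) (Nat.nth (· ∈ toSet zb) K) + 1 :=
      cnt_succ_mem (Nat.nth_mem_of_infinite hzset K)
    have h2 : cnt (toSet zb) (Nat.nth (· ∈ toSet zb) K) = K := by
      rw [cnt]; exact @Nat.count_nth_of_infinite (· ∈ toSet zb) (Classical.decPred _) hzset K
    have h3 : Nat.nth (· ∈ toSet zb) K + 1 ≤ M + 1 := by
      have := le_max_right m (Nat.nth (· ∈ toSet zb) K)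
      omega
    have h4 := cnt_mono (toSet zb) h3
    omega
  have hc0c1 : c0 ≤ c1 := cnt_mono (toSet zb) (by have := le_max_left m (Nat.nth (· ∈ toSet zb) K); omega)
  intro fb hfb
  set G := (Finset.Ico (m+1) (M+1)).filter (fun n => zb n = true) with hG
  have hterm : ∀ n ∈ G, (alphaSeq (toSet fb) n - alphaSeq (toSet zb) n)^2
      = 1/(4*((cnt (toSet zb) n : ℝ)+1)) := by
    intro n hn
    rw [hG, Finset.mem_filter, Finset.mem_Ico] at hn
    have hfbn : fb n = false := hfb n (by omega) (by omega)
    have h1 : n ∉ toSet fb := by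
      simp only [toSet, mem_setOf_eq, hfbn]
      exact Bool.false_ne_true
    rw [alphaSeq_not_mem h1, alphaSeq_mem (show n ∈ toSet zb from hn.2)]
    rw [show (1/4 - (1/4 + hfun (cnt (toSet zb) n)))^2 = (hfun (cnt (toSet zb) n))^2 by ring]
    exact hfun_sq _
  have step1 : ∑ n ∈ G, (alphaSeq (toSet fb) n - alphaSeq (toSet zb) n)^2
      ≤ ∑ n ∈ Finset.range (M+1), (alphaSeq (toSet fb) n - alphaSeq (toSet zb) n)^2 := by
    apply Finset.sum_le_sum_of_subset_of_nonneg
    · intro n hn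
      rw [hG, Finset.mem_filter, Finset.mem_Ico] at hn
      exact Finset.mem_range.2 (by omega)
    · intro n _ _; positivity
  have step2 : ∑ n ∈ G, (alphaSeq (toSet fb) n - alphaSeq (toSet zb) n)^2
      = ∑ k ∈ G.image (cnt (toSet zb)), 1/(4*((k:ℝ)+1)) := by
    rw [Finset.sum_congr rfl hterm]
    rw [Finset.sum_image]
    intro n hn n' hn' hee
    simp only [Finset.mem_coe, hG, Finset.mem_filter, Finset.mem_Ico] at hn hn'
    by_contra hne
    rcases Nat.lt_or_ge n n' with hlt | hge
    · have := cnt_lt_of_mem (show n ∈ toSet zb from hn.2) hlt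
      omega
    · have hlt : n' < n := by omega
      have := cnt_lt_of_mem (show n' ∈ toSet zb from hn'.2) hlt
      omega
  have step3 : ∑ k ∈ Finset.Ico c0 c1, 1/(4*((k:ℝ)+1))
      ≤ ∑ k ∈ G.image (cnt (toSet zb)), 1/(4*((k:ℝ)+1)) := by
    apply Finset.sum_le_sum_of_subset_of_nonneg
    · intro k hk
      rw [Finset.mem_Ico] at hk
      set n := Nat.nth (· ∈ toSet zb) k with hn
      have hmem : n ∈ toSet zb := Nat.nth_mem_of_infinite hzset k
      have hcntn : cnt (toSet zb) n = k := by
        rw [cnt, hn]; exact @Nat.count_nth_of_infinite (· ∈ toSet zb) (Classical.decPred _) hzset k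
      have hlow : m + 1 ≤ n := by
        by_contra hcon
        have h1 : cnt (toSet zb) (n+1) = cnt (toSet zb) n + 1 := cnt_succ_mem hmem
        have h2 : cnt (toSet zb) (n+1) ≤ c0 := cnt_mono (toSet zb) (by omega)
        omega
      have hhigh : n < M + 1 := by
        by_contra hcon
        have h2 : c1 ≤ cnt (toSet zb) n := cnt_mono (toSet zb) (by omega)
        omega
      apply Finset.mem_image.2
      refine ⟨n, ?_, hcntn⟩
      rw [hG, Finset.mem_filter, Finset.mem_Ico]
      exact ⟨⟨hlow, hhigh⟩, hmem⟩
    · intro k _ _; positivity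
  have step4 : 4*R ≤ ∑ k ∈ Finset.Ico c0 c1, 1/((k:ℝ)+1) := by
    have hsub := Finset.sum_Ico_eq_sub (fun k => 1/((k:ℝ)+1)) hc0c1
    have := hK c1 hKc1
    rw [hsub]
    linarith
  have step5 : ∑ k ∈ Finset.Ico c0 c1, 1/(4*((k:ℝ)+1))
      = (1/4) * ∑ k ∈ Finset.Ico c0 c1, 1/((k:ℝ)+1) := by
    rw [Finset.mul_sum]
    exact Finset.sum_congr rfl fun k _ => (one_div_mul_one_div 4 ((k:ℝ)+1)).symm
  calc R = (1/4)*(4*R) := by ring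
    _ ≤ (1/4) * ∑ k ∈ Finset.Ico c0 c1, 1/((k:ℝ)+1) :=
        mul_le_mul_of_nonneg_left step4 (by norm_num)
    _ = ∑ k ∈ Finset.Ico c0 c1, 1/(4*((k:ℝ)+1)) := step5.symm
    _ ≤ ∑ k ∈ G.image (cnt (toSet zb)), 1/(4*((k:ℝ)+1)) := step3
    _ = ∑ n ∈ G, (alphaSeq (toSet fb) n - alphaSeq (toSet zb) n)^2 := step2.symm
    _ ≤ ∑ n ∈ Finset.range (M+1), (alphaSeq (toSet fb) n - alphaSeq (toSet zb) n)^2 := step1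


lemma cylProp_of_kak {w : Set ℕ} {μ : Measure (ℕ → Bool)} (h : IsKakutaniProduct w μ) :
    CylProp μ (alphaSeq w) := by
  intro s f
  rw [h.2 s f]
  refine Finset.prod_congr rfl fun n _ => ?_
  cases hfn : f n <;> simp [wt, hfn]

lemma cnt_agree {f g : ℕ → Bool} {n : ℕ} (h : ∀ k, k < n → f k = g k) :
    cnt (toSet f) n = cnt (toSet g) n := by
  induction n with
  | zero => rfl
  | succ n ih =>
    have hfg := h n (by omega)
    have ih' := ih (fun k hk => h k (by omega))
    by_cases hfn : f n = true
    · rw [cnt_succ_mem (show n ∈ toSet f from hfn),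
        cnt_succ_mem (show n ∈ toSet g by rw [toSet, mem_setOf_eq, ← hfg]; exact hfn), ih']
    · rw [cnt_succ_not_mem hfn,
        cnt_succ_not_mem (show ¬ g n = true by rw [← hfg]; exact hfn), ih']

lemma alphaSeq_dependsOn {f g : ℕ → Bool} (n : ℕ) (h : ∀ k, k ≤ n → f k = g k) :
    alphaSeq (toSet f) n = alphaSeq (toSet g) n := by
  have hmem : (n ∈ toSet f) ↔ (n ∈ toSet g) := by
    simp only [toSet, mem_setOf_eq, h n le_rfl]
  have hc := cnt_agree (f := f) (g := g) (fun k hk => h k (le_of_lt hk))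
  by_cases hf : n ∈ toSet f
  · rw [alphaSeq_mem hf, alphaSeq_mem (hmem.1 hf), hc]
  · rw [alphaSeq_not_mem hf, alphaSeq_not_mem (fun hg => hf (hmem.2 hg))]

end KakAux

/-- For `x ∈ [ω]^ω`, every class of the equivalence relation `∼^x` on `[x]^ω`
(`z ∼^x y` iff `μ^z` and `μ^y` are equivalent) is dense and meagre in `[x]^ω`,
viewed as the subspace of Cantor space of characteristic functions of infinite
subsets of `x`. -/
theorem equivClass_dense_and_meagre (μ : Set ℕ → Measure (ℕ → Bool))
    (hμ : ∀ w : Set ℕ, IsKakutaniProduct w (μ w))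
    (x : Set ℕ) (hx : x.Infinite)
    (z : {f : ℕ → Bool // (toSet f).Infinite ∧ toSet f ⊆ x}) :
    Dense {y : {f : ℕ → Bool // (toSet f).Infinite ∧ toSet f ⊆ x} |
        μ (toSet y.1) ≪ μ (toSet z.1) ∧ μ (toSet z.1) ≪ μ (toSet y.1)} ∧
    IsMeagre {y : {f : ℕ → Bool // (toSet f).Infinite ∧ toSet f ⊆ x} |
        μ (toSet y.1) ≪ μ (toSet z.1) ∧ μ (toSet z.1) ≪ μ (toSet y.1)} := by
  classical
  have hprob : ∀ w : Set ℕ, IsProbabilityMeasure (μ w) := fun w => (hμ w).1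
  have hcyl : ∀ w : Set ℕ, KakAux.CylProp (μ w) (alphaSeq w) :=
    fun w => KakAux.cylProp_of_kak (hμ w)
  have hbdd : ∀ w : Set ℕ, KakAux.Bdd (alphaSeq w) := KakAux.alphaSeq_bdd
  haveI := hprob (toSet z.1)
  constructor
  · -- dense
    refine dense_iff_inter_open.2 fun U hU hne => ?_
    obtain ⟨w, hwU⟩ := hne
    obtain ⟨V, hVopen, hVU⟩ := isOpen_induced_iff.1 hU
    have hwV : (w.1 : ℕ → Bool) ∈ V := by rw [← hVU] at hwU; exact hwU
    obtain ⟨I, u, hu, hsub⟩ := isOpen_pi_iff.1 hVopen w.1 hwV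
    set m := I.sup id with hm
    set yb : ℕ → Bool := fun n => if n ≤ m then w.1 n else z.1 n with hyb
    have hysub : toSet yb ⊆ x := by
      intro n hn
      simp only [toSet, mem_setOf_eq, hyb] at hn
      by_cases h : n ≤ m
      · rw [if_pos h] at hn
        exact w.2.2 hn
      · rw [if_neg h] at hn
        exact z.2.2 hn
    have hyinf : (toSet yb).Infinite := by
      have hsup : toSet z.1 \ Set.Iic m ⊆ toSet yb := by
        intro n hn
        obtain ⟨hn1, hn2⟩ := hn
        rw [Set.mem_Iic, not_le] at hn2
        simp only [toSet, mem_setOf_eq, hyb]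
        rw [if_neg (by omega)]
        exact hn1
      exact (z.2.1.diff (Set.finite_Iic m)).mono hsup
    refine ⟨⟨yb, hyinf, hysub⟩, ?_, ?_, ?_⟩
    · rw [← hVU]
      apply hsub
      intro i hi
      have him : i ≤ m := Finset.le_sup (f := id) hi
      show yb i ∈ u i
      simp only [hyb]
      rw [if_pos him]
      exact (hu i hi).2
    · show μ (toSet yb) ≪ μ (toSet z.1)
      obtain ⟨B, hB⟩ := KakAux.density_bound z.1 w.1 m
      have hB' : ∀ N, ∑ n ∈ Finset.range N,
          (alphaSeq (toSet z.1) n - alphaSeq (toSet yb) n)^2 ≤ B := by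
        intro N
        refine le_trans (le_of_eq (Finset.sum_congr rfl fun n _ => by ring)) (hB N)
      haveI := hprob (toSet yb)
      exact KakAux.acOfBounded (hbdd (toSet z.1)) (hbdd (toSet yb))
        (hcyl (toSet z.1)) (hcyl (toSet yb)) hB'
    · show μ (toSet z.1) ≪ μ (toSet yb)
      obtain ⟨B, hB⟩ := KakAux.density_bound z.1 w.1 m
      haveI := hprob (toSet yb)
      exact KakAux.acOfBounded (hbdd (toSet yb)) (hbdd (toSet z.1))
        (hcyl (toSet yb)) (hcyl (toSet z.1)) (hB ·)
  · -- meagre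
    set D : ℕ → {f : ℕ → Bool // (toSet f).Infinite ∧ toSet f ⊆ x} → ℝ := fun M f =>
      ∑ n ∈ Finset.range M, (alphaSeq (toSet f.1) n - alphaSeq (toSet z.1) n)^2 with hD
    set K : ℕ → Set {f : ℕ → Bool // (toSet f).Infinite ∧ toSet f ⊆ x} := fun N =>
      {f | ∀ M, D M f ≤ (N:ℝ)} with hK
    have hScover : {y : {f : ℕ → Bool // (toSet f).Infinite ∧ toSet f ⊆ x} |
        μ (toSet y.1) ≪ μ (toSet z.1) ∧ μ (toSet z.1) ≪ μ (toSet y.1)} ⊆ ⋃ N, K N := by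
      intro y hy
      have hnotdiv : ¬ (∀ R : ℝ, ∃ M, R ≤ D M y) := by
        intro hdiv
        haveI := hprob (toSet y.1)
        obtain ⟨A, hAme, hA0, hAne⟩ := KakAux.singOfDivergent
          (hbdd (toSet z.1)) (hbdd (toSet y.1)) (hcyl (toSet z.1)) (hcyl (toSet y.1))
          (fun R => by
            obtain ⟨M, hM⟩ := hdiv R
            refine ⟨M, le_trans hM (le_of_eq (Finset.sum_congr rfl fun n _ => by ring))⟩)
        exact hAne (hy.1 hA0)
      push_neg at hnotdiv
      obtain ⟨R, hR⟩ := hnotdiv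
      exact Set.mem_iUnion.2 ⟨⌈R⌉₊, fun M => le_trans (hR M).le (Nat.le_ceil R)⟩
    have hcont : ∀ n : ℕ,
        Continuous (fun f : {f : ℕ → Bool // (toSet f).Infinite ∧ toSet f ⊆ x} =>
          alphaSeq (toSet f.1) n) := by
      intro n
      have heq : (fun f : {f : ℕ → Bool // (toSet f).Infinite ∧ toSet f ⊆ x} =>
            alphaSeq (toSet f.1) n)
          = (fun v : Fin (n+1) → Bool =>
              alphaSeq (toSet (fun k => if h : k < n+1 then v ⟨k, h⟩ else false)) n)
            ∘ (fun f : {f : ℕ → Bool // (toSet f).Infinite ∧ toSet f ⊆ x} =>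
                fun i : Fin (n+1) => f.1 i.1) := by
        funext f
        simp only [Function.comp_apply]
        refine (KakAux.alphaSeq_dependsOn n ?_).symm
        intro k hk
        rw [dif_pos (by omega : k < n+1)]
      rw [heq]
      exact continuous_of_discreteTopology.comp
        (continuous_pi fun i => (continuous_apply i.1).comp continuous_subtype_val)
    have hKclosed : ∀ N, IsClosed (K N) := by
      intro N
      have hKeq : K N = ⋂ M, (D M) ⁻¹' (Set.Iic (N:ℝ)) := by
        ext f
        simp only [hK, mem_setOf_eq, Set.mem_iInter, Set.mem_preimage, Set.mem_Iic]
      rw [hKeq]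
      refine isClosed_iInter fun M => IsClosed.preimage ?_ isClosed_Iic
      apply continuous_finset_sum
      intro n _
      exact ((hcont n).sub continuous_const).pow 2
    have hKnd : ∀ N : ℕ, Dense (K N)ᶜ := by
      intro N
      refine dense_iff_inter_open.2 fun U hU hne => ?_
      obtain ⟨w, hwU⟩ := hne
      obtain ⟨V, hVopen, hVU⟩ := isOpen_induced_iff.1 hU
      have hwV : (w.1 : ℕ → Bool) ∈ V := by rw [← hVU] at hwU; exact hwU
      obtain ⟨I, u, hu, hsub⟩ := isOpen_pi_iff.1 hVopen w.1 hwV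
      set m := I.sup id with hm
      obtain ⟨M, hmM, hMprop⟩ := KakAux.block_divergence z.1 z.2.1 m ((N:ℝ)+1)
      set yb : ℕ → Bool := fun n => if n ≤ m then w.1 n else if n ≤ M then false else z.1 n
        with hyb
      have hysub : toSet yb ⊆ x := by
        intro n hn
        simp only [toSet, mem_setOf_eq, hyb] at hn
        by_cases h1 : n ≤ m
        · rw [if_pos h1] at hn; exact w.2.2 hn
        · rw [if_neg h1] at hn
          by_cases h2 : n ≤ M
          · rw [if_pos h2] at hn; exact absurd hn Bool.false_ne_true
          · rw [if_neg h2] at hn; exact z.2.2 hn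
      have hyinf : (toSet yb).Infinite := by
        have hsup : toSet z.1 \ Set.Iic M ⊆ toSet yb := by
          intro n hn
          obtain ⟨hn1, hn2⟩ := hn
          rw [Set.mem_Iic, not_le] at hn2
          simp only [toSet, mem_setOf_eq, hyb]
          rw [if_neg (by omega), if_neg (by omega)]
          exact hn1
        exact (z.2.1.diff (Set.finite_Iic M)).mono hsup
      refine ⟨⟨yb, hyinf, hysub⟩, ?_, ?_⟩
      · rw [← hVU]
        apply hsub
        intro i hi
        have him : i ≤ m := Finset.le_sup (f := id) hi
        show yb i ∈ u i
        simp only [hyb]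
        rw [if_pos him]
        exact (hu i hi).2
      · intro hmem
        rw [hK, mem_setOf_eq] at hmem
        have h1 := hmem (M+1)
        have h2 : (N:ℝ)+1 ≤ D (M+1) ⟨yb, hyinf, hysub⟩ := by
          apply hMprop
          intro n hn1 hn2
          simp only [hyb]
          rw [if_neg (by omega), if_pos hn2]
        linarith [h2, h1]
    have hKmeagre : ∀ N : ℕ, IsMeagre (K N) := by
      intro N
      rw [IsMeagre]
      exact residual_of_dense_open (hKclosed N).isOpen_compl (hKnd N)
    exact IsMeagre.mono hScover (isMeagre_iUnion hKmeagre)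

end
end
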